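/- arXiv:2602.10587 — 5 statements merged into one kernel-verified Lean document; each statement's English description precedes it below -/
import Mathlib

section
/- There exists a constant C > 0, depending only on d and C_u, such that for every t ∈ (0,1) and every y ∈ ℝ^d, p_t(y) ≤ C · exp(−((‖y‖_∞ − m_t)₊)² / (2σ_t²)). -/
open MeasureTheory Real Set

-- key pointwise inequality
lemma key_pt {t z u : ℝ} (ht0 : 0 < t) (ht1 : t < 1) (hu1 : -1 ≤ u) (hu2 : u ≤ 1) :
    (max (|z| - (1 - t)) 0) ^ 2
      + (1 - t) ^ 2 * (u - max (-1) (min 1 (z / (1 - t)))) ^ 2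
      ≤ (z - (1 - t) * u) ^ 2 := by
  set m := 1 - t with hm
  have hm0 : 0 < m := by simp [hm]; linarith
  rcases le_or_gt (|z|) m with h | h
  · have ha : max (|z| - m) 0 = 0 := max_eq_right (by linarith)
    have hz1 : z / m ≤ 1 := by
      rw [div_le_one hm0]; exact le_trans (le_abs_self z) h
    have hz2 : -1 ≤ z / m := by
      rw [le_div_iff₀ hm0, neg_mul, one_mul]; have := neg_abs_le z; linarith
    have hu0 : max (-1 : ℝ) (min 1 (z / m)) = z / m := by
      rw [min_eq_right hz1, max_eq_right hz2]
    rw [ha, hu0]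
    have hmz : (m * (u - z / m)) ^ 2 = (m * u - z) ^ 2 := by
      rw [mul_sub, mul_div_cancel₀ _ hm0.ne']
    nlinarith [hmz]
  · rcases lt_abs.mp h with hz | hz
    · -- z > m
      have ha : max (|z| - m) 0 = z - m := by
        rw [abs_of_pos (lt_trans hm0 hz)]; exact max_eq_left (by linarith)
      have hu0 : max (-1 : ℝ) (min 1 (z / m)) = 1 := by
        rw [min_eq_left (by rw [le_div_iff₀ hm0]; linarith), max_eq_right (by norm_num)]
      rw [ha, hu0]
      nlinarith [mul_nonneg (mul_nonneg hm0.le (sub_nonneg.2 hu2)) (sub_nonneg.2 hz.le)]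
    · -- -z > m, i.e. z < -m
      have hzneg : z < 0 := by linarith
      have ha : max (|z| - m) 0 = -z - m := by
        rw [abs_of_neg hzneg]; exact max_eq_left (by linarith)
      have hu0 : max (-1 : ℝ) (min 1 (z / m)) = -1 := by
        rw [min_eq_right (by rw [div_le_one hm0]; linarith), max_eq_left]
        rw [div_le_iff₀ hm0]; linarith
      rw [ha, hu0]
      nlinarith [mul_nonneg (mul_nonneg hm0.le (by linarith : (0:ℝ) ≤ u + 1))  (sub_nonneg.2 hz.le)]

lemma oneDim {t : ℝ} (ht0 : 0 < t) (ht1 : t < 1) (z : ℝ) :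
    ∫ u in Icc (-1:ℝ) 1, (2 * π * (t * (2 - t))) ^ (-(1:ℝ) / 2) *
        Real.exp (-(z - (1 - t) * u) ^ 2 / (2 * (t * (2 - t))))
      ≤ 2 * Real.exp (-(max (|z| - (1 - t)) 0) ^ 2 / (2 * (t * (2 - t)))) := by
  set m := 1 - t with hm
  set s := t * (2 - t) with hs
  have hm0 : 0 < m := by simp only [hm]; linarith
  have hs0 : 0 < s := by simp only [hs]; nlinarith
  set c := (2 * π * s) ^ (-(1:ℝ) / 2) with hc
  set a := max (|z| - m) 0 with ha
  have ha0 : 0 ≤ a := le_max_right _ _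
  have h2pis : 0 < 2 * π * s := by positivity
  have hc0 : 0 < c := rpow_pos_of_pos h2pis _
  set u0 := max (-1:ℝ) (min 1 (z / m)) with hu0
  have hcont : Continuous fun u : ℝ => c * Real.exp (-(z - m * u) ^ 2 / (2 * s)) := by
    fun_prop
  set b := m ^ 2 / (2 * s) with hb
  have hb0 : 0 < b := by positivity
  have hgauss_int : Integrable (fun u : ℝ =>
      Real.exp (-a ^ 2 / (2 * s)) * (c * Real.exp (-b * (u - u0) ^ 2))) := by
    exact (((integrable_exp_neg_mul_sq hb0).comp_sub_right u0).const_mul c).const_mul _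
  have hpt : ∀ u ∈ Icc (-1:ℝ) 1,
      c * Real.exp (-(z - m * u) ^ 2 / (2 * s))
        ≤ Real.exp (-a ^ 2 / (2 * s)) * (c * Real.exp (-b * (u - u0) ^ 2)) := by
    intro u hu
    have hkey := key_pt (z := z) (u := u) ht0 ht1 hu.1 hu.2
    rw [← hm, ← ha, ← hu0] at hkey
    have : Real.exp (-(z - m * u) ^ 2 / (2 * s))
        ≤ Real.exp (-a ^ 2 / (2 * s)) * Real.exp (-b * (u - u0) ^ 2) := by
      rw [← Real.exp_add]
      apply Real.exp_le_exp.2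
      have h1 : -(z - m * u) ^ 2 / (2 * s) ≤ -(a ^ 2 + m ^ 2 * (u - u0) ^ 2) / (2 * s) := by
        apply (div_le_div_iff_of_pos_right (by positivity)).2; linarith
      calc -(z - m * u) ^ 2 / (2 * s) ≤ -(a ^ 2 + m ^ 2 * (u - u0) ^ 2) / (2 * s) := h1
        _ = -a ^ 2 / (2 * s) + -b * (u - u0) ^ 2 := by rw [hb]; field_simp; ring
    calc c * Real.exp (-(z - m * u) ^ 2 / (2 * s))
        ≤ c * (Real.exp (-a ^ 2 / (2 * s)) * Real.exp (-b * (u - u0) ^ 2)) := by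
          exact mul_le_mul_of_nonneg_left this hc0.le
      _ = Real.exp (-a ^ 2 / (2 * s)) * (c * Real.exp (-b * (u - u0) ^ 2)) := by ring
  have hgauss_val : (∫ u : ℝ, Real.exp (-b * (u - u0) ^ 2)) = Real.sqrt (π / b) := by
    rw [integral_sub_right_eq_self (fun u : ℝ => Real.exp (-b * u ^ 2)) u0]
    exact integral_gaussian b
  have step1 : ∫ u in Icc (-1:ℝ) 1, c * Real.exp (-(z - m * u) ^ 2 / (2 * s))
      ≤ Real.exp (-a ^ 2 / (2 * s)) / m := by
    calc ∫ u in Icc (-1:ℝ) 1, c * Real.exp (-(z - m * u) ^ 2 / (2 * s))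
        ≤ ∫ u in Icc (-1:ℝ) 1,
            Real.exp (-a ^ 2 / (2 * s)) * (c * Real.exp (-b * (u - u0) ^ 2)) :=
          setIntegral_mono_on (hcont.integrableOn_Icc) (hgauss_int.integrableOn)
            measurableSet_Icc hpt
      _ ≤ ∫ u : ℝ, Real.exp (-a ^ 2 / (2 * s)) * (c * Real.exp (-b * (u - u0) ^ 2)) :=
          setIntegral_le_integral hgauss_int (Filter.Eventually.of_forall fun u => by positivity)
      _ = Real.exp (-a ^ 2 / (2 * s)) * (c * Real.sqrt (π / b)) := by
          rw [integral_const_mul, integral_const_mul, hgauss_val]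
      _ = Real.exp (-a ^ 2 / (2 * s)) / m := by
          have hsq : Real.sqrt (π / b) = Real.sqrt (2 * π * s) / m := by
            rw [hb, div_div_eq_mul_div, show π * (2 * s) = 2 * π * s by ring,
              Real.sqrt_div h2pis.le, Real.sqrt_sq hm0.le]
          have hcs : c * Real.sqrt (2 * π * s) = 1 := by
            rw [Real.sqrt_eq_rpow, hc, ← Real.rpow_add h2pis]
            norm_num
          rw [hsq]
          calc Real.exp (-a ^ 2 / (2 * s)) * (c * (Real.sqrt (2 * π * s) / m))
              = Real.exp (-a ^ 2 / (2 * s)) * ((c * Real.sqrt (2 * π * s)) / m) := by ring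
            _ = Real.exp (-a ^ 2 / (2 * s)) / m := by rw [hcs]; ring
  rcases le_or_gt t (1/2) with h | h
  · have hm2 : 1/2 ≤ m := by simp only [hm]; linarith
    refine step1.trans ?_
    calc Real.exp (-a ^ 2 / (2 * s)) / m ≤ Real.exp (-a ^ 2 / (2 * s)) / (1/2) :=
          div_le_div_of_nonneg_left (Real.exp_pos _).le (by norm_num) hm2
      _ = 2 * Real.exp (-a ^ 2 / (2 * s)) := by ring
  · have hs12 : 1/2 < s := by simp only [hs]; nlinarith [mul_pos (by linarith : (0:ℝ) < t - 1/2) (by linarith : (0:ℝ) < 1 - t)]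
    have h1 : (1:ℝ) ≤ 2 * π * s := by nlinarith [pi_gt_three]
    have hc1 : c ≤ 1 := Real.rpow_le_one_of_one_le_of_nonpos h1 (by norm_num)
    have hpt2 : ∀ u ∈ Icc (-1:ℝ) 1,
        c * Real.exp (-(z - m * u) ^ 2 / (2 * s)) ≤ c * Real.exp (-a ^ 2 / (2 * s)) := by
      intro u hu
      have hkey := key_pt (z := z) (u := u) ht0 ht1 hu.1 hu.2
      rw [← hm, ← ha, ← hu0] at hkey
      have ha2 : a ^ 2 ≤ (z - m * u) ^ 2 := by nlinarith [sq_nonneg (u - u0)]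
      have : Real.exp (-(z - m * u) ^ 2 / (2 * s)) ≤ Real.exp (-a ^ 2 / (2 * s)) := by
        apply Real.exp_le_exp.2
        apply (div_le_div_iff_of_pos_right (by positivity)).2
        linarith
      exact mul_le_mul_of_nonneg_left this hc0.le
    calc ∫ u in Icc (-1:ℝ) 1, c * Real.exp (-(z - m * u) ^ 2 / (2 * s))
        ≤ ∫ _u in Icc (-1:ℝ) 1, c * Real.exp (-a ^ 2 / (2 * s)) :=
          setIntegral_mono_on hcont.integrableOn_Icc
            (integrableOn_const measure_Icc_lt_top.ne) measurableSet_Icc hpt2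
      _ = (volume (Icc (-1:ℝ) 1)).toReal * (c * Real.exp (-a ^ 2 / (2 * s))) := by
          rw [setIntegral_const, smul_eq_mul]; rfl
      _ = 2 * (c * Real.exp (-a ^ 2 / (2 * s))) := by
          rw [Real.volume_Icc]
          norm_num
      _ ≤ 2 * (1 * Real.exp (-a ^ 2 / (2 * s))) := by
          have := Real.exp_pos (-a ^ 2 / (2 * s))
          nlinarith
      _ = 2 * Real.exp (-a ^ 2 / (2 * s)) := by ring
/-- **Upper Gaussian-type bound on the diffused density.**
For `m_t = 1 - t`, `σ_t = √(t(2-t))` and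
`p_t(y) = ∫ p₀(u) (2π σ_t²)^{-d/2} exp(-‖y - m_t u‖²/(2σ_t²)) du`,
there is a constant `C > 0` depending only on `d` and `C_u` such that
`p_t(y) ≤ C exp(-((‖y‖_∞ - m_t)₊)²/(2σ_t²))`. -/
theorem stmt_0 (d : ℕ) (hd : 1 ≤ d) (Cl Cu : ℝ) (hCl : 0 < Cl) (hClCu : Cl ≤ Cu) :
    ∃ C > (0 : ℝ), ∀ p0 : EuclideanSpace ℝ (Fin d) → ℝ,
      Measurable p0 →
      (∀ u : EuclideanSpace ℝ (Fin d), (∃ i, 1 < |u i|) → p0 u = 0) →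
      (∀ u : EuclideanSpace ℝ (Fin d), (∀ i, |u i| ≤ 1) → Cl ≤ p0 u ∧ p0 u ≤ Cu) →
      ∀ t ∈ Set.Ioo (0 : ℝ) 1, ∀ y : EuclideanSpace ℝ (Fin d),
        (∫ u : EuclideanSpace ℝ (Fin d),
            p0 u * ((2 * π * (t * (2 - t))) ^ (-(d : ℝ) / 2) *
              Real.exp (-‖y - (1 - t) • u‖ ^ 2 / (2 * (t * (2 - t))))))
          ≤ C * Real.exp (-(max ((⨆ i, |y i|) - (1 - t)) 0) ^ 2 / (2 * (t * (2 - t)))) := by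
  have hCu : 0 < Cu := lt_of_lt_of_le hCl hClCu
  refine ⟨Cu * 2 ^ d, by positivity, ?_⟩
  intro p0 hp0m hp0z hp0b t ht y
  obtain ⟨ht0, ht1⟩ := ht
  set m := 1 - t with hm
  set s := t * (2 - t) with hs
  have hm0 : 0 < m := by simp only [hm]; linarith
  have hs0 : 0 < s := by simp only [hs]; nlinarith
  have h2pis : 0 < 2 * π * s := by positivity
  set c := (2 * π * s) ^ (-(1:ℝ) / 2) with hc
  set K := (2 * π * s) ^ (-(d:ℝ) / 2) with hK
  have hc0 : 0 < c := rpow_pos_of_pos h2pis _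
  have hK0 : 0 < K := rpow_pos_of_pos h2pis _
  have hKc : K = c ^ d := by
    rw [hK, hc, ← Real.rpow_natCast ((2 * π * s) ^ (-(1:ℝ)/2)) d, ← Real.rpow_mul h2pis.le]
    congr 1
    push_cast
    ring
  -- the max coordinate
  have hne : Nonempty (Fin d) := ⟨⟨0, hd⟩⟩
  obtain ⟨i0, hi0⟩ : ∃ i0 : Fin d, ∀ j, |y j| ≤ |y i0| := by
    obtain ⟨i0, -, h⟩ := Finset.exists_max_image Finset.univ (fun i => |y i|)
      ⟨⟨0, hd⟩, Finset.mem_univ _⟩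
    exact ⟨i0, fun j => h j (Finset.mem_univ _)⟩
  have hsup : (⨆ i, |y i|) = |y i0| :=
    le_antisymm (ciSup_le hi0) (le_ciSup (f := fun i => |y i|) (Set.Finite.bddAbove (Set.finite_range _)) i0)
  set a := max ((⨆ i, |y i|) - m) 0 with ha
  -- 1-d pieces
  set h : Fin d → ℝ → ℝ := fun i v =>
    (Icc (-1:ℝ) 1).indicator (fun w => c * Real.exp (-(y i - m * w) ^ 2 / (2 * s))) v with hh
  have hh_nonneg : ∀ i v, 0 ≤ h i v := fun i v =>
    Set.indicator_nonneg (fun w _ => by positivity) v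
  have hh_int : ∀ i, Integrable (h i) := by
    intro i
    rw [hh]
    exact (Continuous.integrableOn_Icc (by fun_prop)).integrable_indicator measurableSet_Icc
  -- the majorant
  set g : EuclideanSpace ℝ (Fin d) → ℝ := fun u => Cu * ∏ i, h i (u i) with hg
  -- pointwise bound
  have hfg : ∀ u : EuclideanSpace ℝ (Fin d),
      p0 u * (K * Real.exp (-‖y - m • u‖ ^ 2 / (2 * s))) ≤ g u := by
    intro u
    by_cases hcube : ∀ i, |u i| ≤ 1
    · have hprod : (∏ i, h i (u i)) = K * Real.exp (-‖y - m • u‖ ^ 2 / (2 * s)) := by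
        have h1 : ∀ i : Fin d, h i (u i)
            = c * Real.exp (-(y i - m * u i) ^ 2 / (2 * s)) := fun i =>
          Set.indicator_of_mem (by constructor <;> [linarith [(abs_le.1 (hcube i)).1];
            exact (abs_le.1 (hcube i)).2]) _
        have hnorm : ‖y - m • u‖ ^ 2 = ∑ i, (y i - m * u i) ^ 2 := by
          rw [EuclideanSpace.norm_eq, Real.sq_sqrt (by positivity)]
          congr 1; ext i
          simp [Real.norm_eq_abs, sq_abs]
        calc (∏ i, h i (u i)) = ∏ i, c * Real.exp (-(y i - m * u i) ^ 2 / (2 * s)) := by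
              exact Finset.prod_congr rfl fun i _ => h1 i
          _ = c ^ d * Real.exp (∑ i, -(y i - m * u i) ^ 2 / (2 * s)) := by
              rw [Finset.prod_mul_distrib, Finset.prod_const, ← Real.exp_sum]
              simp [Finset.card_univ]
          _ = K * Real.exp (-‖y - m • u‖ ^ 2 / (2 * s)) := by
              rw [hKc, hnorm]
              congr 1
              rw [← Finset.sum_div, ← Finset.sum_neg_distrib]
      simp only [hg]
      rw [hprod]
      exact mul_le_mul_of_nonneg_right (hp0b u hcube).2 (by positivity)
    · push_neg at hcube
      obtain ⟨i, hi⟩ := hcube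
      rw [hp0z u ⟨i, hi⟩, zero_mul]
      exact mul_nonneg hCu.le (Finset.prod_nonneg fun i _ => hh_nonneg i (u i))
  -- integrability of g
  have hmp := EuclideanSpace.volume_preserving_symm_measurableEquiv_toLp (ι := Fin d)
  have hgpi : Integrable (fun x : Fin d → ℝ => ∏ i, h i (x i)) :=
    Integrable.fintype_prod_dep hh_int
  have hgE : Integrable (fun u : EuclideanSpace ℝ (Fin d) => ∏ i, h i (u i)) := by
    rw [← MeasurePreserving.integrable_comp_emb hmp.symm
      (MeasurableEquiv.measurableEmbedding _)]
    exact hgpi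
  have hgi : Integrable g := by
    rw [hg]
    exact hgE.const_mul Cu
  -- integrability of f
  have hfi : Integrable (fun u : EuclideanSpace ℝ (Fin d) =>
      p0 u * (K * Real.exp (-‖y - m • u‖ ^ 2 / (2 * s)))) := by
    apply Integrable.mono' hgi
    · apply (hp0m.mul ?_).aestronglyMeasurable
      fun_prop
    · refine Filter.Eventually.of_forall fun u => ?_
      have hp0nn : 0 ≤ p0 u := by
        by_cases hcube : ∀ i, |u i| ≤ 1
        · linarith [(hp0b u hcube).1]
        · push_neg at hcube
          obtain ⟨i, hi⟩ := hcube
          rw [hp0z u ⟨i, hi⟩]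
      rw [Real.norm_eq_abs, abs_of_nonneg (by positivity)]
      exact hfg u
  -- main chain
  have h1 : (∫ u : EuclideanSpace ℝ (Fin d),
      p0 u * (K * Real.exp (-‖y - m • u‖ ^ 2 / (2 * s)))) ≤ ∫ u, g u :=
    integral_mono hfi hgi hfg
  have h2 : (∫ u, g u) = Cu * ∏ i, ∫ v : ℝ, h i v := by
    rw [hg, integral_const_mul]
    congr 1
    rw [← MeasurePreserving.integral_comp hmp.symm (MeasurableEquiv.measurableEmbedding _)]
    exact integral_fintype_prod_eq_prod h
  -- one-dimensional bounds
  have hJ : ∀ i, (∫ v : ℝ, h i v)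
      ≤ 2 * Real.exp (-(max (|y i| - m) 0) ^ 2 / (2 * s)) := by
    intro i
    rw [hh, integral_indicator measurableSet_Icc]
    exact oneDim ht0 ht1 (y i)
  have hJnn : ∀ i, 0 ≤ ∫ v : ℝ, h i v := fun i =>
    integral_nonneg (hh_nonneg i)
  have h3 : (∏ i, ∫ v : ℝ, h i v) ≤ 2 ^ (d - 1) * (2 * Real.exp (-a ^ 2 / (2 * s))) := by
    rw [← Finset.mul_prod_erase Finset.univ _ (Finset.mem_univ i0)]
    have hb1 : (∫ v : ℝ, h i0 v) ≤ 2 * Real.exp (-a ^ 2 / (2 * s)) := by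
      have := hJ i0
      rw [ha, hsup]
      exact this
    have hb2 : (∏ i ∈ Finset.univ.erase i0, ∫ v : ℝ, h i v) ≤ 2 ^ (d - 1) := by
      have : (∏ i ∈ Finset.univ.erase i0, ∫ v : ℝ, h i v)
          ≤ ∏ _i ∈ Finset.univ.erase i0, (2:ℝ) := by
        apply Finset.prod_le_prod (fun i _ => hJnn i)
        intro i _
        refine (hJ i).trans ?_
        have : Real.exp (-(max (|y i| - m) 0) ^ 2 / (2 * s)) ≤ 1 := by
          apply Real.exp_le_one_iff.2
          apply div_nonpos_of_nonpos_of_nonneg (neg_nonpos.2 (sq_nonneg _)) (by positivity)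
        linarith
      refine this.trans ?_
      rw [Finset.prod_const, Finset.card_erase_of_mem (Finset.mem_univ _), Finset.card_univ,
        Fintype.card_fin]
    calc (∫ v : ℝ, h i0 v) * ∏ i ∈ Finset.univ.erase i0, ∫ v : ℝ, h i v
        ≤ (2 * Real.exp (-a ^ 2 / (2 * s))) * 2 ^ (d - 1) := by
          apply mul_le_mul hb1 hb2 (Finset.prod_nonneg fun i _ => hJnn i) (by positivity)
      _ = 2 ^ (d - 1) * (2 * Real.exp (-a ^ 2 / (2 * s))) := by ring
  have hpow : (2:ℝ) ^ (d - 1) * 2 = 2 ^ d := by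
    rw [← pow_succ]
    congr 1
    omega
  calc (∫ u : EuclideanSpace ℝ (Fin d),
      p0 u * (K * Real.exp (-‖y - m • u‖ ^ 2 / (2 * s))))
      ≤ Cu * ∏ i, ∫ v : ℝ, h i v := h2 ▸ h1
    _ ≤ Cu * (2 ^ (d - 1) * (2 * Real.exp (-a ^ 2 / (2 * s)))) := by
        exact mul_le_mul_of_nonneg_left h3 hCu.le
    _ = Cu * 2 ^ d * Real.exp (-a ^ 2 / (2 * s)) := by
        rw [← hpow]; ring
end

section
/- There exists a constant c > 0, depending only on d and C_l, such that for every t ∈ (0,1) and every y ∈ ℝ^d, p_t(y) ≥ c · exp(−d · ((‖y‖_∞ − m_t)₊)² / σ_t²). -/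
open MeasureTheory Real Set

set_option maxHeartbeats 1600000 in
/-- **Lower Gaussian-type bound on the diffused density.**
There is `c > 0` depending only on `d` and `C_l` with
`p_t(y) ≥ c exp(-d ((‖y‖_∞ - m_t)₊)²/σ_t²)`. -/
theorem stmt_1 (d : ℕ) (hd : 1 ≤ d) (Cl Cu : ℝ) (hCl : 0 < Cl) (hClCu : Cl ≤ Cu) :
    ∃ c > (0 : ℝ), ∀ p0 : EuclideanSpace ℝ (Fin d) → ℝ,
      Measurable p0 →
      (∀ u : EuclideanSpace ℝ (Fin d), (∃ i, 1 < |u i|) → p0 u = 0) →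
      (∀ u : EuclideanSpace ℝ (Fin d), (∀ i, |u i| ≤ 1) → Cl ≤ p0 u ∧ p0 u ≤ Cu) →
      ∀ t ∈ Set.Ioo (0 : ℝ) 1, ∀ y : EuclideanSpace ℝ (Fin d),
        c * Real.exp (-(d : ℝ) * (max ((⨆ i, |y i|) - (1 - t)) 0) ^ 2 / (t * (2 - t)))
          ≤ ∫ u : EuclideanSpace ℝ (Fin d),
              p0 u * ((2 * π * (t * (2 - t))) ^ (-(d : ℝ) / 2) *
                Real.exp (-‖y - (1 - t) • u‖ ^ 2 / (2 * (t * (2 - t))))) := by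
  refine ⟨Cl * (2 * π) ^ (-(d : ℝ) / 2) * Real.exp (-(d : ℝ)), by positivity, ?_⟩
  intro p0 hp0m hp0zero hp0bd t ht y
  obtain ⟨ht0, ht1⟩ := ht
  set s := t * (2 - t) with hs_def
  have hs0 : 0 < s := by nlinarith
  have hs1 : s ≤ 1 := by nlinarith
  set m := 1 - t with hm_def
  have hm0 : 0 < m := by simp only [hm_def]; linarith
  have hm1 : m ≤ 1 := by simp only [hm_def]; linarith
  set σ := Real.sqrt s with hσ_def
  have hσ0 : 0 < σ := Real.sqrt_pos.mpr hs0
  have hσsq : σ ^ 2 = s := Real.sq_sqrt hs0.le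
  have hσ1 : σ ≤ 1 := by
    rw [show (1:ℝ) = Real.sqrt 1 by simp [Real.sqrt_one]]
    exact Real.sqrt_le_sqrt hs1
  set ℓ := min 1 (σ / m) with hℓ_def
  have hℓ0 : 0 < ℓ := lt_min one_pos (div_pos hσ0 hm0)
  have hℓ1 : ℓ ≤ 1 := min_le_left _ _
  have hσℓ : σ ≤ ℓ := by
    refine le_min hσ1 ?_
    rw [le_div_iff₀ hm0]
    nlinarith
  have hmℓσ : m * ℓ ≤ σ := by
    have h1 : ℓ ≤ σ / m := min_le_right _ _
    have := mul_le_mul_of_nonneg_left h1 hm0.le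
    rwa [mul_div_cancel₀ _ (ne_of_gt hm0)] at this
  set M := max ((⨆ i, |y i|) - m) 0 with hM_def
  have hM0 : 0 ≤ M := le_max_right _ _
  set A := (2 * π * s) ^ (-(d : ℝ) / 2) with hA_def
  have hA0 : 0 < A := Real.rpow_pos_of_pos (by positivity) _
  set E := Real.exp (-(d : ℝ) * M ^ 2 / s) with hE_def
  have hE0 : 0 < E := Real.exp_pos _
  -- coordinate construction
  set cc : Fin d → ℝ := fun i => max (-1) (min 1 (y i / m)) with hcc_def
  set a : Fin d → ℝ := fun i => if 0 ≤ cc i then cc i - ℓ else cc i with ha_def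
  have hsupy : ∀ i, |y i| ≤ ⨆ j, |y j| := fun i => le_ciSup (f := fun j => |y j|) (Finite.bddAbove_range _) i
  have hcoord : ∀ i : Fin d, ∀ v, v ∈ Set.Icc (a i) (a i + ℓ) →
      (|v| ≤ 1) ∧ |y i - m * v| ≤ M + m * ℓ := by
    intro i v hv
    obtain ⟨hv1, hv2⟩ := hv
    have hcc1 : -1 ≤ cc i := le_max_left _ _
    have hcc2 : cc i ≤ 1 := max_le (by linarith) (min_le_left _ _)
    have hvcc : |v - cc i| ≤ ℓ := by
      simp only [ha_def] at hv1 hv2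
      by_cases h0 : 0 ≤ cc i
      · rw [if_pos h0] at hv1 hv2
        rw [abs_le]; constructor <;> linarith
      · rw [if_neg h0] at hv1 hv2
        rw [abs_le]; constructor <;> linarith
    have hvmem : |v| ≤ 1 := by
      simp only [ha_def] at hv1 hv2
      by_cases h0 : 0 ≤ cc i
      · rw [if_pos h0] at hv1 hv2
        rw [abs_le]; constructor <;> linarith
      · rw [if_neg h0] at hv1 hv2
        rw [abs_le]; constructor <;> linarith
    refine ⟨hvmem, ?_⟩
    have hyc : |y i - m * cc i| ≤ M := by
      rcases le_or_gt 1 (y i / m) with h1 | h1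
      · have hcceq : cc i = 1 := by
          simp only [hcc_def]
          rw [min_eq_left h1, max_eq_right (by norm_num : (-1:ℝ) ≤ 1)]
        have hym : m ≤ y i := by
          have := (le_div_iff₀ hm0).mp h1
          linarith
        have h2 : y i ≤ ⨆ j, |y j| := le_trans (le_abs_self _) (hsupy i)
        rw [hcceq, mul_one, abs_of_nonneg (by linarith)]
        have : (⨆ j, |y j|) - m ≤ M := le_max_left _ _
        linarith
      · rcases le_or_gt (y i / m) (-1) with h2 | h2
        · have hcceq : cc i = -1 := by
            simp only [hcc_def]
            rw [min_eq_right h1.le, max_eq_left h2]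
          have hym : y i ≤ -m := by
            have := (div_le_iff₀ hm0).mp h2
            linarith
          have h3 : -y i ≤ ⨆ j, |y j| := le_trans (neg_le_abs _) (hsupy i)
          rw [hcceq, mul_neg_one, abs_of_nonpos (by linarith)]
          have : (⨆ j, |y j|) - m ≤ M := le_max_left _ _
          linarith
        · have hcceq : cc i = y i / m := by
            simp only [hcc_def]
            rw [min_eq_right h1.le, max_eq_right h2.le]
          rw [hcceq, mul_div_cancel₀ _ (ne_of_gt hm0)]
          simpa using hM0
    calc |y i - m * v| = |(y i - m * cc i) + m * (cc i - v)| := by ring_nf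
      _ ≤ |y i - m * cc i| + |m * (cc i - v)| := abs_add_le _ _
      _ = |y i - m * cc i| + m * |cc i - v| := by rw [abs_mul, abs_of_pos hm0]
      _ ≤ M + m * ℓ := by
          have : |cc i - v| = |v - cc i| := abs_sub_comm _ _
          rw [this]
          exact add_le_add hyc (mul_le_mul_of_nonneg_left hvcc hm0.le)
  -- sets
  set e := (MeasurableEquiv.toLp 2 (Fin d → ℝ)).symm with he_def
  set S : Set (EuclideanSpace ℝ (Fin d)) :=
    ⇑e ⁻¹' Set.univ.pi (fun i => Set.Icc (a i) (a i + ℓ)) with hS_def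
  set K : Set (EuclideanSpace ℝ (Fin d)) :=
    ⇑e ⁻¹' Set.univ.pi (fun _ => Set.Icc (-1 : ℝ) 1) with hK_def
  have hmemS : ∀ u : EuclideanSpace ℝ (Fin d),
      u ∈ S ↔ ∀ i, u i ∈ Set.Icc (a i) (a i + ℓ) := by
    intro u
    simp [hS_def, Set.mem_pi, he_def, MeasurableEquiv.coe_toLp_symm, Pi.le_def,
      Set.mem_Icc, forall_and]
  have hmemK : ∀ u : EuclideanSpace ℝ (Fin d), u ∈ K ↔ ∀ i, |u i| ≤ 1 := by
    intro u
    simp [hK_def, Set.mem_pi, he_def, MeasurableEquiv.coe_toLp_symm, abs_le, Pi.le_def,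
      Set.mem_Icc, forall_and]
  have hSmeas : MeasurableSet S :=
    e.measurable (MeasurableSet.univ_pi fun i => measurableSet_Icc)
  have hKmeas : MeasurableSet K :=
    e.measurable (MeasurableSet.univ_pi fun i => measurableSet_Icc)
  have hvolS : volume S = ENNReal.ofReal ℓ ^ d := by
    rw [hS_def, (EuclideanSpace.volume_preserving_symm_measurableEquiv_toLp (Fin d)).measure_preimage
      (MeasurableSet.univ_pi fun i => measurableSet_Icc).nullMeasurableSet]
    rw [volume_pi_pi]
    simp [Real.volume_Icc, add_sub_cancel_left]
  have hvolK : volume K = ENNReal.ofReal 2 ^ d := by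
    rw [hK_def, (EuclideanSpace.volume_preserving_symm_measurableEquiv_toLp (Fin d)).measure_preimage
      (MeasurableSet.univ_pi fun i => measurableSet_Icc).nullMeasurableSet]
    rw [volume_pi_pi]
    norm_num [Real.volume_Icc]
  have hSfin : volume S ≠ ⊤ := by
    rw [hvolS]; exact ENNReal.pow_ne_top ENNReal.ofReal_ne_top
  have hKfin : volume K ≠ ⊤ := by
    rw [hvolK]; exact ENNReal.pow_ne_top ENNReal.ofReal_ne_top
  -- the integrand
  set g : EuclideanSpace ℝ (Fin d) → ℝ :=
    fun u => p0 u * (A * Real.exp (-‖y - m • u‖ ^ 2 / (2 * s))) with hg_def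
  have hg_meas : Measurable g := by
    apply hp0m.mul
    apply Measurable.const_mul
    apply Real.measurable_exp.comp
    fun_prop
  have hg_nonneg : ∀ u, 0 ≤ g u := by
    intro u
    by_cases hu : ∀ i, |u i| ≤ 1
    · have := (hp0bd u hu).1
      have : 0 ≤ p0 u := le_trans hCl.le this
      positivity
    · push_neg at hu
      obtain ⟨i, hi⟩ := hu
      rw [hg_def]
      simp only
      rw [hp0zero u ⟨i, hi⟩, zero_mul]
  have hg_int : Integrable g := by
    refine Integrable.mono' (g := K.indicator fun _ => Cu * A) ?_
      hg_meas.aestronglyMeasurable (Filter.Eventually.of_forall ?_)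
    · rw [integrable_indicator_iff hKmeas]
      exact integrableOn_const hKfin
    · intro u
      by_cases hu : ∀ i, |u i| ≤ 1
      · rw [Set.indicator_of_mem ((hmemK u).mpr hu)]
        rw [Real.norm_eq_abs, abs_of_nonneg (hg_nonneg u)]
        have h1 : p0 u ≤ Cu := (hp0bd u hu).2
        have h2 : Real.exp (-‖y - m • u‖ ^ 2 / (2 * s)) ≤ 1 := by
          rw [Real.exp_le_one_iff]
          apply div_nonpos_of_nonpos_of_nonneg
          · simp [sq_nonneg]
          · positivity
        have h3 : 0 ≤ p0 u := le_trans hCl.le (hp0bd u hu).1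
        calc p0 u * (A * Real.exp (-‖y - m • u‖ ^ 2 / (2 * s)))
            ≤ Cu * (A * 1) := by
              apply mul_le_mul h1 _ (by positivity) (by linarith)
              exact mul_le_mul_of_nonneg_left h2 hA0.le
          _ = Cu * A := by ring
      · push_neg at hu
        obtain ⟨i, hi⟩ := hu
        rw [Set.indicator_of_notMem (fun h => absurd ((hmemK u).mp h i) (not_le.mpr hi))]
        rw [hg_def]
        simp only
        rw [hp0zero u ⟨i, hi⟩, zero_mul]
        simp
  -- pointwise lower bound on S
  have hptwise : ∀ u ∈ S, Cl * (A * (E * Real.exp (-(d : ℝ)))) ≤ g u := by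
    intro u hu
    have hu' := (hmemS u).mp hu
    have hcoords := fun i => hcoord i (u i) (hu' i)
    have hp0Cl : Cl ≤ p0 u := (hp0bd u (fun i => (hcoords i).1)).1
    have hnorm : ‖y - m • u‖ ^ 2 ≤ (d : ℝ) * (M + m * ℓ) ^ 2 := by
      rw [EuclideanSpace.norm_eq, Real.sq_sqrt (by positivity)]
      calc ∑ i, ‖(y - m • u) i‖ ^ 2 ≤ ∑ _i : Fin d, (M + m * ℓ) ^ 2 := by
            apply Finset.sum_le_sum
            intro i _
            have heq : (y - m • u) i = y i - m * u i := by
              simp [PiLp.sub_apply, PiLp.smul_apply, smul_eq_mul]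
            rw [heq, Real.norm_eq_abs]
            exact pow_le_pow_left₀ (abs_nonneg _) (hcoords i).2 2
        _ = (d : ℝ) * (M + m * ℓ) ^ 2 := by
            rw [Finset.sum_const, Finset.card_univ, Fintype.card_fin, nsmul_eq_mul]
    have hnorm2 : ‖y - m • u‖ ^ 2 ≤ 2 * (d : ℝ) * M ^ 2 + 2 * (d : ℝ) * s := by
      have hmls : (m * ℓ) ^ 2 ≤ s := by
        calc (m * ℓ) ^ 2 ≤ σ ^ 2 := pow_le_pow_left₀ (by positivity) hmℓσ 2
          _ = s := hσsq
      have hd0 : (0 : ℝ) ≤ (d : ℝ) := Nat.cast_nonneg d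
      have hb : (M + m * ℓ) ^ 2 ≤ 2 * M ^ 2 + 2 * s := by
        nlinarith [sq_nonneg (M - m * ℓ), hmls]
      have hb2 := mul_le_mul_of_nonneg_left hb hd0
      nlinarith [hnorm, hb2]
    have hexp : E * Real.exp (-(d : ℝ)) ≤ Real.exp (-‖y - m • u‖ ^ 2 / (2 * s)) := by
      rw [hE_def, ← Real.exp_add, Real.exp_le_exp]
      rw [show -(d : ℝ) * M ^ 2 / s + -(d : ℝ) = (-(2 * (d : ℝ) * M ^ 2 + 2 * d * s)) / (2 * s) by
        field_simp; ring]
      gcongr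
    calc Cl * (A * (E * Real.exp (-(d : ℝ))))
        ≤ p0 u * (A * Real.exp (-‖y - m • u‖ ^ 2 / (2 * s))) := by
          apply mul_le_mul hp0Cl _ (by positivity) (by linarith)
          exact mul_le_mul_of_nonneg_left hexp hA0.le
      _ = g u := rfl
  -- key rpow bound
  have hAℓ : (2 * π) ^ (-(d : ℝ) / 2) ≤ A * ℓ ^ d := by
    have hσd : σ ^ d = s ^ ((d : ℝ) / 2) := by
      rw [hσ_def, Real.sqrt_eq_rpow, ← Real.rpow_natCast (s ^ ((1:ℝ)/2)) d,
        ← Real.rpow_mul hs0.le]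
      ring_nf
    have hAσ : A * σ ^ d = (2 * π) ^ (-(d : ℝ) / 2) := by
      rw [hA_def, hσd, Real.mul_rpow (by positivity) hs0.le, mul_assoc,
        ← Real.rpow_add hs0]
      rw [show -(d:ℝ)/2 + (d:ℝ)/2 = 0 by ring, Real.rpow_zero, mul_one]
    calc (2 * π) ^ (-(d : ℝ) / 2) = A * σ ^ d := hAσ.symm
      _ ≤ A * ℓ ^ d := by
          exact mul_le_mul_of_nonneg_left (pow_le_pow_left₀ hσ0.le hσℓ d) hA0.le
  -- final chain
  calc Cl * (2 * π) ^ (-(d : ℝ) / 2) * Real.exp (-(d : ℝ)) * E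
      = (Cl * E * Real.exp (-(d : ℝ))) * ((2 * π) ^ (-(d : ℝ) / 2)) := by ring
    _ ≤ (Cl * E * Real.exp (-(d : ℝ))) * (A * ℓ ^ d) := by
        exact mul_le_mul_of_nonneg_left hAℓ (by positivity)
    _ = (Cl * (A * (E * Real.exp (-(d : ℝ))))) * (volume S).toReal := by
        rw [hvolS, ENNReal.toReal_pow, ENNReal.toReal_ofReal hℓ0.le]; ring
    _ ≤ ∫ u in S, g u := by
        have := setIntegral_ge_of_const_le hSmeas hSfin hptwise hg_int.integrableOn
        rwa [smul_eq_mul, mul_comm, Measure.real] at this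
    _ ≤ ∫ u, g u := setIntegral_le_integral hg_int (Filter.Eventually.of_forall hg_nonneg)
end

section
/- For every multi-index α ∈ ℕ^d there exist constants C ≥ 1 and C′ > 0, depending only on d, C_u and α, such that for every ε ∈ (0, e^{−1}), every t ∈ (0,1) and every y ∈ ℝ^d, | ∫_{ℝ^d} g(u) du − ∫_{A_y} g(u) du | ≤ C′ · ε, where g(u) := (∏_{i=1}^d ((y_i − m_t u_i)/σ_t)^{α_i}) · (2π σ_t²)^{−d/2} · p₀(u) · exp(−‖y − m_t u‖²/(2σ_t²)) and A_y := ∏_{i=1}^d [ (y_i − C σ_t √(log(1/ε)))/m_t , (y_i + C σ_t √(log(1/ε)))/m_t ]. -/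
open MeasureTheory Real Set

private lemma poly_gauss_bound (k : ℕ) :
    ∃ c : ℝ, 1 ≤ c ∧ ∀ x : ℝ, |x| ^ k * Real.exp (-x ^ 2 / 4) ≤ c := by
  refine ⟨max 1 (Real.sqrt k ^ k), le_max_left _ _, fun x => ?_⟩
  have hexp1 : Real.exp (-x ^ 2 / 4) ≤ 1 := by
    rw [Real.exp_le_one_iff]
    nlinarith [sq_nonneg x]
  rcases Nat.eq_zero_or_pos k with hk | hk
  · simp only [hk, pow_zero, one_mul]
    exact le_max_of_le_left hexp1
  · have hk0 : (0:ℝ) < k := by exact_mod_cast hk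
    have hsk : (0:ℝ) < Real.sqrt k := Real.sqrt_pos.2 hk0
    have hsq : Real.sqrt k ^ 2 = (k:ℝ) := Real.sq_sqrt hk0.le
    have h1 : |x| / Real.sqrt k ≤ 1 + x ^ 2 / (4 * k) := by
      have h2 := two_mul_le_add_sq (|x| / (2 * Real.sqrt k)) 1
      have h3 : (|x| / (2 * Real.sqrt k)) ^ 2 = x ^ 2 / (4 * k) := by
        rw [div_pow, sq_abs, mul_pow, hsq]; norm_num
      have h4 : 2 * (|x| / (2 * Real.sqrt k)) * 1 = |x| / Real.sqrt k := by
        field_simp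
      rw [h4, h3] at h2
      linarith
    have h4 : |x| / Real.sqrt k ≤ Real.exp (x ^ 2 / (4 * k)) :=
      h1.trans (by linarith [Real.add_one_le_exp (x ^ 2 / (4 * k))])
    have h5 : (|x| / Real.sqrt k) ^ k ≤ Real.exp (x ^ 2 / (4 * k)) ^ k :=
      pow_le_pow_left₀ (by positivity) h4 k
    have h6 : Real.exp (x ^ 2 / (4 * k)) ^ k = Real.exp (x ^ 2 / 4) := by
      rw [← Real.exp_nat_mul]; congr 1; field_simp
    have h7 : |x| ^ k ≤ Real.sqrt k ^ k * Real.exp (x ^ 2 / 4) := by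
      rw [div_pow, h6, div_le_iff₀ (by positivity)] at h5
      linarith [h5]
    calc |x| ^ k * Real.exp (-x ^ 2 / 4)
        ≤ (Real.sqrt k ^ k * Real.exp (x ^ 2 / 4)) * Real.exp (-x ^ 2 / 4) :=
          mul_le_mul_of_nonneg_right h7 (Real.exp_pos _).le
      _ = Real.sqrt k ^ k := by
          rw [mul_assoc, ← Real.exp_add]
          ring_nf
          rw [Real.exp_zero, mul_one]
      _ ≤ max 1 (Real.sqrt k ^ k) := le_max_right _ _

set_option maxHeartbeats 2000000 in
/-- **Integral clipping lemma.** For every multi-index `α` there are constants `C ≥ 1`,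
`C' > 0` (depending only on `d`, `C_u`, `α`) so that clipping the Gaussian-weighted
moment integral to the box `A_y` changes it by at most `C' ε`. -/
theorem stmt_3 (d : ℕ) (hd : 1 ≤ d) (Cl Cu : ℝ) (hCl : 0 < Cl) (hClCu : Cl ≤ Cu)
    (α : Fin d → ℕ) :
    ∃ C ≥ (1 : ℝ), ∃ C' > (0 : ℝ), ∀ p0 : EuclideanSpace ℝ (Fin d) → ℝ,
      Measurable p0 →
      (∀ u : EuclideanSpace ℝ (Fin d), (∃ i, 1 < |u i|) → p0 u = 0) →
      (∀ u : EuclideanSpace ℝ (Fin d), (∀ i, |u i| ≤ 1) → Cl ≤ p0 u ∧ p0 u ≤ Cu) →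
      ∀ ε ∈ Set.Ioo (0 : ℝ) (Real.exp (-1)), ∀ t ∈ Set.Ioo (0 : ℝ) 1,
        ∀ y : EuclideanSpace ℝ (Fin d),
        |(∫ u : EuclideanSpace ℝ (Fin d),
              (∏ i, ((y i - (1 - t) * u i) / Real.sqrt (t * (2 - t))) ^ α i) *
                ((2 * π * (t * (2 - t))) ^ (-(d : ℝ) / 2) *
                  (p0 u * Real.exp (-‖y - (1 - t) • u‖ ^ 2 / (2 * (t * (2 - t))))))) -
            ∫ u in {u : EuclideanSpace ℝ (Fin d) | ∀ i,
                u i ∈ Set.Icc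
                  ((y i - C * Real.sqrt (t * (2 - t)) * Real.sqrt (Real.log (1 / ε))) / (1 - t))
                  ((y i + C * Real.sqrt (t * (2 - t)) * Real.sqrt (Real.log (1 / ε))) / (1 - t))},
              (∏ i, ((y i - (1 - t) * u i) / Real.sqrt (t * (2 - t))) ^ α i) *
                ((2 * π * (t * (2 - t))) ^ (-(d : ℝ) / 2) *
                  (p0 u * Real.exp (-‖y - (1 - t) • u‖ ^ 2 / (2 * (t * (2 - t))))))| ≤ C' * ε := by
  choose c hc1 hc2 using fun i => poly_gauss_bound (α i)
  set M : ℝ := ∏ i, c i with hM_def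
  have hM1 : (1:ℝ) ≤ M := by
    rw [hM_def]
    calc (1:ℝ) = ∏ _i : Fin d, 1 := by simp
      _ ≤ ∏ i, c i := Finset.prod_le_prod (fun i _ => zero_le_one) (fun i _ => hc1 i)
  have hM0 : (0:ℝ) < M := lt_of_lt_of_le one_pos hM1
  have hCu : (0:ℝ) < Cu := lt_of_lt_of_le hCl hClCu
  refine ⟨3, by norm_num, M * Cu * 4 ^ d, by positivity, ?_⟩
  intro p0 hp0m hp0z hp0b ε hε t ht y
  obtain ⟨hε0, hε1⟩ := hε
  obtain ⟨ht0, ht1⟩ := ht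
  have hεlt1 : ε < 1 := hε1.trans (by
    calc Real.exp (-1) < Real.exp 0 := Real.exp_lt_exp.2 (by norm_num)
      _ = 1 := Real.exp_zero)
  set σ2 : ℝ := t * (2 - t) with hσ2_def
  have hσ2 : 0 < σ2 := mul_pos ht0 (by linarith)
  set σ : ℝ := Real.sqrt σ2 with hσ_def
  have hσ : 0 < σ := Real.sqrt_pos.2 hσ2
  have hσsq : σ ^ 2 = σ2 := Real.sq_sqrt hσ2.le
  set m : ℝ := 1 - t with hm_def
  have hm : 0 < m := by rw [hm_def]; linarith
  have hmσ : m ^ 2 + σ2 = 1 := by rw [hm_def, hσ2_def]; ring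
  set L : ℝ := Real.log (1 / ε) with hL_def
  have hL0 : 0 ≤ L := Real.log_nonneg (one_le_one_div hε0 hεlt1.le)
  have hLsq : Real.sqrt L ^ 2 = L := Real.sq_sqrt hL0
  have hεexp : Real.exp (-L) = ε := by
    rw [hL_def, one_div, Real.log_inv, neg_neg, Real.exp_log hε0]
  set B : ℝ := (2 * π * σ2) ^ (-(d:ℝ) / 2) with hB_def
  have hB : 0 < B := Real.rpow_pos_of_pos (by positivity) _
  set cube : Set (EuclideanSpace ℝ (Fin d)) := {u | ∀ i, |u i| ≤ 1} with hcube_def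
  set S : Set (EuclideanSpace ℝ (Fin d)) := {u | ∀ i,
      u i ∈ Set.Icc ((y i - 3 * σ * Real.sqrt L) / m) ((y i + 3 * σ * Real.sqrt L) / m)}
    with hS_def
  set g : EuclideanSpace ℝ (Fin d) → ℝ := fun u =>
      (∏ i, ((y i - m * u i) / σ) ^ α i) *
        (B * (p0 u * Real.exp (-‖y - m • u‖ ^ 2 / (2 * σ2)))) with hg_def
  have hev : ∀ i, Measurable fun u : EuclideanSpace ℝ (Fin d) => u i := fun i =>
    (measurable_pi_apply i).comp (MeasurableEquiv.toLp 2 (Fin d → ℝ)).symm.measurable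
  have hcube_m : MeasurableSet cube := by
    have hc : cube = ⋂ i, (fun u : EuclideanSpace ℝ (Fin d) => u i) ⁻¹' (Set.Icc (-1) 1) := by
      ext u; simp [hcube_def, abs_le]
    rw [hc]
    exact MeasurableSet.iInter fun i => (hev i) measurableSet_Icc
  have hS_m : MeasurableSet S := by
    have hc : S = ⋂ i, (fun u : EuclideanSpace ℝ (Fin d) => u i) ⁻¹'
        (Set.Icc ((y i - 3 * σ * Real.sqrt L) / m) ((y i + 3 * σ * Real.sqrt L) / m)) := by
      ext u; simp [hS_def]
    rw [hc]
    exact MeasurableSet.iInter fun i => (hev i) measurableSet_Icc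
  have hnormsq : ∀ u : EuclideanSpace ℝ (Fin d),
      ‖y - m • u‖ ^ 2 = ∑ i, (y i - m * u i) ^ 2 := by
    intro u
    rw [EuclideanSpace.norm_eq, Real.sq_sqrt (by positivity)]
    refine Finset.sum_congr rfl fun i _ => ?_
    simp [Real.norm_eq_abs, sq_abs]
  -- |g| in product form
  have habs : ∀ u, |g u| = (∏ i, |(y i - m * u i) / σ| ^ α i) *
      (B * (|p0 u| * Real.exp (-‖y - m • u‖ ^ 2 / (2 * σ2)))) := by
    intro u
    rw [hg_def]
    rw [abs_mul, abs_mul, abs_mul, Finset.abs_prod, abs_of_pos hB,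
      abs_of_pos (Real.exp_pos _)]
    simp_rw [abs_pow]
  have hprodM : ∀ u, (∏ i, |(y i - m * u i) / σ| ^ α i) *
      Real.exp (-‖y - m • u‖ ^ 2 / (4 * σ2)) ≤ M := by
    intro u
    have hexp_eq : Real.exp (-‖y - m • u‖ ^ 2 / (4 * σ2)) =
        ∏ i, Real.exp (-((y i - m * u i) / σ) ^ 2 / 4) := by
      have h1 : ∀ i : Fin d, -((y i - m * u i) / σ) ^ 2 / 4
          = -((y i - m * u i) ^ 2 / (4 * σ2)) := by
        intro i
        rw [div_pow, hσsq, neg_div, div_div, mul_comm σ2 4]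
      rw [← Real.exp_sum]
      congr 1
      simp_rw [h1]
      rw [hnormsq u, neg_div, Finset.sum_div]
      simp
    calc (∏ i, |(y i - m * u i) / σ| ^ α i) * Real.exp (-‖y - m • u‖ ^ 2 / (4 * σ2))
        = ∏ i, (|(y i - m * u i) / σ| ^ α i * Real.exp (-((y i - m * u i) / σ) ^ 2 / 4)) := by
          rw [hexp_eq, Finset.prod_mul_distrib]
      _ ≤ ∏ i, c i := Finset.prod_le_prod (fun i _ => by positivity) (fun i _ => hc2 i _)
      _ = M := hM_def.symm
  -- main pointwise bound
  have hgb : ∀ u, |g u| ≤ Set.indicator cube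
      (fun u => M * Cu * (B * Real.exp (-‖y - m • u‖ ^ 2 / (4 * σ2)))) u := by
    intro u
    by_cases hu : u ∈ cube
    · rw [Set.indicator_of_mem hu]
      have hp0c : |p0 u| ≤ Cu := by
        obtain ⟨h1, h2⟩ := hp0b u hu
        rw [abs_of_nonneg (hCl.le.trans h1)]; exact h2
      have hsplit : Real.exp (-‖y - m • u‖ ^ 2 / (2 * σ2)) =
          Real.exp (-‖y - m • u‖ ^ 2 / (4 * σ2)) * Real.exp (-‖y - m • u‖ ^ 2 / (4 * σ2)) := by
        rw [← Real.exp_add]; congr 1; field_simp; ring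
      rw [habs u, hsplit]
      have e1 : (∏ i, |(y i - m * u i) / σ| ^ α i) *
          (B * (|p0 u| * (Real.exp (-‖y - m • u‖ ^ 2 / (4 * σ2)) *
            Real.exp (-‖y - m • u‖ ^ 2 / (4 * σ2)))))
          = ((∏ i, |(y i - m * u i) / σ| ^ α i) * Real.exp (-‖y - m • u‖ ^ 2 / (4 * σ2))) *
            (|p0 u| * (B * Real.exp (-‖y - m • u‖ ^ 2 / (4 * σ2)))) := by ring
      rw [e1]
      calc ((∏ i, |(y i - m * u i) / σ| ^ α i) * Real.exp (-‖y - m • u‖ ^ 2 / (4 * σ2))) *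
            (|p0 u| * (B * Real.exp (-‖y - m • u‖ ^ 2 / (4 * σ2))))
          ≤ M * (Cu * (B * Real.exp (-‖y - m • u‖ ^ 2 / (4 * σ2)))) := by
            apply mul_le_mul (hprodM u)
              (mul_le_mul_of_nonneg_right hp0c (by positivity)) (by positivity) hM0.le
        _ = M * Cu * (B * Real.exp (-‖y - m • u‖ ^ 2 / (4 * σ2))) := by ring
    · rw [Set.indicator_of_notMem hu]
      have hz : p0 u = 0 := by
        apply hp0z
        simpa [hcube_def, not_forall, not_le] using hu
      rw [hg_def]
      simp [hz]
  -- volume of cube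
  have hcube_vol : volume cube = ENNReal.ofReal 2 ^ d := by
    have hc : cube = (MeasurableEquiv.toLp 2 (Fin d → ℝ)).symm ⁻¹'
        (Set.univ.pi fun _ : Fin d => Set.Icc (-1:ℝ) 1) := by
      ext u
      simp only [hcube_def, Set.mem_setOf_eq, Set.mem_preimage, Set.mem_univ_pi,
        Set.mem_Icc, abs_le]
      rfl
    rw [hc, (EuclideanSpace.volume_preserving_symm_measurableEquiv_toLp (Fin d)).measure_preimage
      ((MeasurableSet.univ_pi fun _ => measurableSet_Icc).nullMeasurableSet)]
    rw [volume_pi_pi]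
    norm_num
  have hcube_fin : volume cube < ⊤ := by
    rw [hcube_vol]; exact ENNReal.pow_lt_top ENNReal.ofReal_lt_top
  have hgm : Measurable g := by
    rw [hg_def]
    apply Measurable.mul
    · apply Finset.measurable_prod
      intro i _
      exact ((((hev i).const_mul m).const_sub (y i)).div_const σ).pow_const (α i)
    · apply Measurable.const_mul
      apply hp0m.mul
      apply Measurable.comp Real.measurable_exp
      apply Measurable.div_const
      apply Measurable.neg
      apply Measurable.pow_const
      exact (continuous_const.sub (continuous_id.const_smul m)).norm.measurable
  have hg_int : Integrable g := by
    refine Integrable.mono' ((integrable_indicator_iff hcube_m).2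
      (integrableOn_const hcube_fin.ne :
        IntegrableOn (fun _ => M * Cu * B) cube volume))
      hgm.aestronglyMeasurable (ae_of_all _ fun u => ?_)
    rw [Real.norm_eq_abs]
    refine (hgb u).trans ?_
    by_cases hu : u ∈ cube
    · rw [Set.indicator_of_mem hu, Set.indicator_of_mem hu]
      have hex : Real.exp (-‖y - m • u‖ ^ 2 / (4 * σ2)) ≤ 1 := by
        rw [Real.exp_le_one_iff]
        apply div_nonpos_of_nonpos_of_nonneg (neg_nonpos.2 (by positivity)) (by positivity)
      calc M * Cu * (B * Real.exp (-‖y - m • u‖ ^ 2 / (4 * σ2)))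
          ≤ M * Cu * (B * 1) :=
            mul_le_mul_of_nonneg_left (mul_le_mul_of_nonneg_left hex hB.le) (by positivity)
        _ = M * Cu * B := by ring
    · rw [Set.indicator_of_notMem hu, Set.indicator_of_notMem hu]
  -- tail pointwise bound
  have htail : ∀ u ∉ S, |g u| ≤ Set.indicator cube
      (fun u => M * Cu * ε * (B * Real.exp (-‖y - m • u‖ ^ 2 / (8 * σ2)))) u := by
    intro u hu
    refine (hgb u).trans ?_
    by_cases hcu : u ∈ cube
    · rw [Set.indicator_of_mem hcu, Set.indicator_of_mem hcu]
      have hn : 9 * σ2 * L ≤ ‖y - m • u‖ ^ 2 := by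
        simp only [hS_def, Set.mem_setOf_eq, not_forall] at hu
        obtain ⟨i, hi⟩ := hu
        rw [Set.mem_Icc, not_and_or, not_le, not_le] at hi
        have hzi : 3 * σ * Real.sqrt L ≤ |y i - m * u i| := by
          rcases hi with hi | hi
          · have h2 := (lt_div_iff₀ hm).1 hi
            calc 3 * σ * Real.sqrt L ≤ y i - m * u i := by nlinarith
              _ ≤ |y i - m * u i| := le_abs_self _
          · have h2 := (div_lt_iff₀ hm).1 hi
            calc 3 * σ * Real.sqrt L ≤ -(y i - m * u i) := by nlinarith
              _ ≤ |y i - m * u i| := neg_le_abs _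
        have hsq2 : (3 * σ * Real.sqrt L) ^ 2 ≤ (y i - m * u i) ^ 2 := by
          rw [← sq_abs (y i - m * u i)]
          exact pow_le_pow_left₀ (by positivity) hzi 2
        rw [hnormsq u]
        calc 9 * σ2 * L = (3 * σ * Real.sqrt L) ^ 2 := by
              rw [mul_pow, mul_pow, hσsq, hLsq]; ring
          _ ≤ (y i - m * u i) ^ 2 := hsq2
          _ ≤ ∑ j, (y j - m * u j) ^ 2 :=
              Finset.single_le_sum (f := fun j => (y j - m * u j) ^ 2)
                (fun j _ => sq_nonneg _) (Finset.mem_univ i)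
      have hexpb : Real.exp (-‖y - m • u‖ ^ 2 / (4 * σ2)) ≤
          ε * Real.exp (-‖y - m • u‖ ^ 2 / (8 * σ2)) := by
        have e1 : Real.exp (-‖y - m • u‖ ^ 2 / (4 * σ2)) =
            Real.exp (-‖y - m • u‖ ^ 2 / (8 * σ2)) * Real.exp (-‖y - m • u‖ ^ 2 / (8 * σ2)) := by
          rw [← Real.exp_add]; congr 1; field_simp; ring
        have e2 : Real.exp (-‖y - m • u‖ ^ 2 / (8 * σ2)) ≤ ε := by
          rw [← hεexp]
          apply Real.exp_le_exp.2
          rw [neg_div, neg_le_neg_iff, le_div_iff₀ (by positivity)]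
          nlinarith
        rw [e1]
        exact mul_le_mul_of_nonneg_right e2 (Real.exp_pos _).le
      calc M * Cu * (B * Real.exp (-‖y - m • u‖ ^ 2 / (4 * σ2)))
          ≤ M * Cu * (B * (ε * Real.exp (-‖y - m • u‖ ^ 2 / (8 * σ2)))) :=
            mul_le_mul_of_nonneg_left (mul_le_mul_of_nonneg_left hexpb hB.le) (by positivity)
        _ = M * Cu * ε * (B * Real.exp (-‖y - m • u‖ ^ 2 / (8 * σ2))) := by ring
    · rw [Set.indicator_of_notMem hcu, Set.indicator_of_notMem hcu]
  -- the integrable majorant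
  have hcont8 : Continuous fun u : EuclideanSpace ℝ (Fin d) =>
      M * Cu * ε * (B * Real.exp (-‖y - m • u‖ ^ 2 / (8 * σ2))) := by fun_prop
  have hh_int : Integrable (Set.indicator cube
      (fun u => M * Cu * ε * (B * Real.exp (-‖y - m • u‖ ^ 2 / (8 * σ2))))) := by
    rw [integrable_indicator_iff hcube_m]
    refine Integrable.mono' (integrableOn_const hcube_fin.ne :
        IntegrableOn (fun _ => M * Cu * ε * B) cube volume)
      hcont8.aestronglyMeasurable.restrict (ae_of_all _ fun u => ?_)
    rw [Real.norm_eq_abs, abs_of_nonneg (by positivity)]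
    have hex : Real.exp (-‖y - m • u‖ ^ 2 / (8 * σ2)) ≤ 1 := by
      rw [Real.exp_le_one_iff]
      apply div_nonpos_of_nonpos_of_nonneg (neg_nonpos.2 (by positivity)) (by positivity)
    calc M * Cu * ε * (B * Real.exp (-‖y - m • u‖ ^ 2 / (8 * σ2)))
        ≤ M * Cu * ε * (B * 1) :=
          mul_le_mul_of_nonneg_left (mul_le_mul_of_nonneg_left hex hB.le) (by positivity)
      _ = M * Cu * ε * B := by ring
  have hIE_nonneg : 0 ≤ ∫ u in cube, Real.exp (-‖y - m • u‖ ^ 2 / (8 * σ2)) :=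
    setIntegral_nonneg hcube_m (fun u _ => (Real.exp_pos _).le)
  have hIE_intOn : IntegrableOn (fun u : EuclideanSpace ℝ (Fin d) =>
      Real.exp (-‖y - m • u‖ ^ 2 / (8 * σ2))) cube := by
    refine Integrable.mono' (integrableOn_const hcube_fin.ne :
        IntegrableOn (fun _ => (1:ℝ)) cube volume)
      (Continuous.aestronglyMeasurable (by fun_prop)).restrict (ae_of_all _ fun u => ?_)
    rw [Real.norm_eq_abs, abs_of_pos (Real.exp_pos _), Real.exp_le_one_iff]
    apply div_nonpos_of_nonpos_of_nonneg (neg_nonpos.2 (by positivity)) (by positivity)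
  -- key bound on B * IE
  have hkey : B * ∫ u in cube, Real.exp (-‖y - m • u‖ ^ 2 / (8 * σ2)) ≤ 4 ^ d := by
    rcases le_or_gt σ2 2⁻¹ with hcase | hcase
    · -- σ2 small: m is bounded below
      have hb8 : (0:ℝ) < (8 * σ2)⁻¹ := by positivity
      set f : EuclideanSpace ℝ (Fin d) → ℝ :=
        fun v => Real.exp (-(8 * σ2)⁻¹ * ‖v‖ ^ 2) with hf_def
      have hf_int : Integrable f := by
        have h1 := GaussianFourier.integrable_cexp_neg_mul_sq_norm_add
          (V := EuclideanSpace ℝ (Fin d)) (b := ((8 * σ2)⁻¹ : ℂ)) (by simpa using hb8) 0 0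
        refine (h1.re).congr (ae_of_all _ fun v => ?_)
        rw [hf_def]
        simp only [zero_mul, add_zero]
        rw [show (-((8 * σ2)⁻¹ : ℂ) * (‖v‖ : ℂ) ^ 2) = ((-(8 * σ2)⁻¹ * ‖v‖ ^ 2 : ℝ) : ℂ) by
          push_cast; ring]
        simp only [RCLike.re_to_complex]
        rw [← Complex.ofReal_exp, Complex.ofReal_re]
      have hint_comp : Integrable fun u : EuclideanSpace ℝ (Fin d) => f (y - m • u) := by
        have h2 : Integrable fun v : EuclideanSpace ℝ (Fin d) => f (y - v) :=
          hf_int.comp_sub_left y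
        exact h2.comp_smul hm.ne'
      have hval : (∫ u : EuclideanSpace ℝ (Fin d), f (y - m • u))
          = ((m ^ d)⁻¹ : ℝ) * ∫ v, f v := by
        have h3 := Measure.integral_comp_smul_of_nonneg (volume : Measure (EuclideanSpace ℝ (Fin d)))
          (fun v => f (y - v)) m (hR := hm.le)
        rw [finrank_euclideanSpace_fin] at h3
        rw [show (fun u : EuclideanSpace ℝ (Fin d) => f (y - m • u))
          = fun u => (fun v => f (y - v)) (m • u) from rfl, h3,
          integral_sub_left_eq_self f volume y, smul_eq_mul]
      have hgauss : (∫ v : EuclideanSpace ℝ (Fin d), f v)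
          = (π / (8 * σ2)⁻¹) ^ ((d:ℝ) / 2) := by
        rw [hf_def]
        have h4 := GaussianFourier.integral_rexp_neg_mul_sq_norm (V := EuclideanSpace ℝ (Fin d)) hb8
        rw [finrank_euclideanSpace_fin] at h4
        exact h4
      have hIE1 : (∫ u in cube, Real.exp (-‖y - m • u‖ ^ 2 / (8 * σ2)))
          ≤ (m ^ d)⁻¹ * (π / (8 * σ2)⁻¹) ^ ((d:ℝ) / 2) := by
        have heq : ∀ u : EuclideanSpace ℝ (Fin d),
            Real.exp (-‖y - m • u‖ ^ 2 / (8 * σ2)) = f (y - m • u) := by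
          intro u
          rw [hf_def]
          congr 1
          ring
        simp_rw [heq]
        calc (∫ u in cube, f (y - m • u))
            ≤ ∫ u, f (y - m • u) := setIntegral_le_integral hint_comp
              (ae_of_all _ fun u => by rw [hf_def]; exact (Real.exp_pos _).le)
          _ = (m ^ d)⁻¹ * (π / (8 * σ2)⁻¹) ^ ((d:ℝ) / 2) := by rw [hval, hgauss]
      have hm2 : m⁻¹ ≤ Real.sqrt 2 := by
        have h1 : (2:ℝ)⁻¹ ≤ m ^ 2 := by linarith
        have h2 : Real.sqrt 2⁻¹ ≤ m := by
          rw [← Real.sqrt_sq hm.le]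
          exact Real.sqrt_le_sqrt h1
        rw [Real.sqrt_inv] at h2
        calc m⁻¹ ≤ ((Real.sqrt 2)⁻¹)⁻¹ :=
              inv_anti₀ (by positivity) h2
          _ = Real.sqrt 2 := inv_inv _
      have hBval : B * (π / (8 * σ2)⁻¹) ^ ((d:ℝ) / 2) = 2 ^ d := by
        have hratio : π / (8 * σ2)⁻¹ / (2 * π * σ2) = 4 := by
          field_simp
          ring
        have h42 : (4:ℝ) ^ ((d:ℝ) / 2) = 2 ^ d := by
          have h4eq : (4:ℝ) = (2:ℝ) ^ (2:ℝ) := by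
            rw [show (2:ℝ) = ((2:ℕ):ℝ) by norm_num, Real.rpow_natCast]
            norm_num
          rw [h4eq, ← Real.rpow_mul (by norm_num : (0:ℝ) ≤ 2),
            show (2:ℝ) * ((d:ℝ)/2) = (d:ℝ) by ring, Real.rpow_natCast]
        rw [hB_def, neg_div, Real.rpow_neg (by positivity), inv_mul_eq_div,
          ← Real.div_rpow (by positivity) (by positivity), hratio, h42]
      calc B * ∫ u in cube, Real.exp (-‖y - m • u‖ ^ 2 / (8 * σ2))
          ≤ B * ((m ^ d)⁻¹ * (π / (8 * σ2)⁻¹) ^ ((d:ℝ) / 2)) :=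
            mul_le_mul_of_nonneg_left hIE1 hB.le
        _ = (m ^ d)⁻¹ * (B * (π / (8 * σ2)⁻¹) ^ ((d:ℝ) / 2)) := by ring
        _ = (m ^ d)⁻¹ * 2 ^ d := by rw [hBval]
        _ = (m⁻¹) ^ d * 2 ^ d := by rw [inv_pow]
        _ ≤ Real.sqrt 2 ^ d * 2 ^ d := by
            apply mul_le_mul_of_nonneg_right
              (pow_le_pow_left₀ (inv_nonneg.2 hm.le) hm2 d) (by positivity)
        _ = (Real.sqrt 2 * 2) ^ d := by rw [mul_pow]
        _ ≤ 4 ^ d := by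
            apply pow_le_pow_left₀ (by positivity)
            nlinarith [Real.sq_sqrt (by norm_num : (0:ℝ) ≤ 2), Real.sqrt_nonneg 2]
    · -- σ2 large
      have hB1 : B ≤ 1 := by
        rw [hB_def]
        apply Real.rpow_le_one_of_one_le_of_nonpos
        · nlinarith [Real.pi_gt_three]
        · rw [neg_div]
          exact neg_nonpos.2 (by positivity)
      have hIE2 : ∫ u in cube, Real.exp (-‖y - m • u‖ ^ 2 / (8 * σ2)) ≤ 2 ^ d := by
        calc ∫ u in cube, Real.exp (-‖y - m • u‖ ^ 2 / (8 * σ2))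
            ≤ ∫ _u in cube, (1:ℝ) := by
              refine setIntegral_mono_on hIE_intOn (integrableOn_const hcube_fin.ne)
                hcube_m (fun u _ => ?_)
              rw [Real.exp_le_one_iff]
              apply div_nonpos_of_nonpos_of_nonneg (neg_nonpos.2 (by positivity)) (by positivity)
          _ = (volume cube).toReal := by rw [setIntegral_const]; simp; rfl
          _ = 2 ^ d := by
              rw [hcube_vol, ENNReal.toReal_pow, ENNReal.toReal_ofReal (by norm_num)]
          _ ≤ 2 ^ d := le_refl _
      calc B * ∫ u in cube, Real.exp (-‖y - m • u‖ ^ 2 / (8 * σ2))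
          ≤ 1 * 2 ^ d := mul_le_mul hB1 hIE2 hIE_nonneg zero_le_one
        _ ≤ 4 ^ d := by
            rw [one_mul]
            exact pow_le_pow_left₀ (by norm_num) (by norm_num) d
  -- assembly
  have hdiff : (∫ u, g u) - ∫ u in S, g u = ∫ u in Sᶜ, g u := by
    rw [← integral_add_compl hS_m hg_int]; ring
  calc |(∫ u, g u) - ∫ u in S, g u| = |∫ u in Sᶜ, g u| := by rw [hdiff]
    _ ≤ ∫ u in Sᶜ, |g u| := by
        simpa [Real.norm_eq_abs] using
          norm_integral_le_integral_norm (μ := volume.restrict Sᶜ) g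
    _ ≤ ∫ u in Sᶜ, Set.indicator cube
          (fun u => M * Cu * ε * (B * Real.exp (-‖y - m • u‖ ^ 2 / (8 * σ2)))) u :=
        setIntegral_mono_on hg_int.abs.integrableOn hh_int.integrableOn
          hS_m.compl (fun u hu => htail u hu)
    _ ≤ ∫ u, Set.indicator cube
          (fun u => M * Cu * ε * (B * Real.exp (-‖y - m • u‖ ^ 2 / (8 * σ2)))) u :=
        setIntegral_le_integral hh_int (ae_of_all _ fun u =>
          Set.indicator_nonneg (fun v _ => by positivity) u)
    _ = (M * Cu * ε) * (B * ∫ u in cube, Real.exp (-‖y - m • u‖ ^ 2 / (8 * σ2))) := by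
        rw [integral_indicator hcube_m]
        simp_rw [show ∀ a : ℝ, M * Cu * ε * (B * a) = (M * Cu * ε * B) * a from fun a => by ring]
        rw [integral_const_mul]
    _ ≤ (M * Cu * ε) * 4 ^ d :=
        mul_le_mul_of_nonneg_left hkey (by positivity)
    _ = M * Cu * 4 ^ d * ε := by ring
end

section
/- There exists a constant C > 0, depending only on d, such that for every T ∈ (0, 1/2], the Kullback–Leibler divergence of q_T from the standard Gaussian satisfies ∫_{ℝ^d} q_T(y) · log( q_T(y)/φ_d(y) ) dy ≤ C · T². -/
open MeasureTheory Real Set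

noncomputable section

/-- Standard Gaussian density on `ℝ^d`. -/
def stdGauss (d : ℕ) (z : EuclideanSpace ℝ (Fin d)) : ℝ :=
  (2 * π) ^ (-(d : ℝ) / 2) * Real.exp (-‖z‖ ^ 2 / 2)

/-- Marginal density `q_T` at time `1 - T` of the variance preserving forward
diffusion started from `p₀`. -/
def fwdDensity (d : ℕ) (p0 : EuclideanSpace ℝ (Fin d) → ℝ) (T : ℝ)
    (y : EuclideanSpace ℝ (Fin d)) : ℝ :=
  ∫ u : EuclideanSpace ℝ (Fin d),
    p0 u * ((2 * π * (1 - T ^ 2)) ^ (-(d : ℝ) / 2) *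
      Real.exp (-‖y - T • u‖ ^ 2 / (2 * (1 - T ^ 2))))


open scoped ENNReal NNReal

variable {d : ℕ}
local notation "E" => EuclideanSpace ℝ (Fin d)

lemma gauss_int (b : ℝ) (hb : 0 < b) (m : E) :
    ∫ y : E, rexp (-b * ‖y - m‖ ^ 2) = (π / b) ^ ((d : ℝ) / 2) := by
  rw [integral_sub_right_eq_self (fun y : E => rexp (-b * ‖y‖ ^ 2)) m,
    GaussianFourier.integral_rexp_neg_mul_sq_norm hb, finrank_euclideanSpace_fin]

lemma gauss_integrable (b : ℝ) (hb : 0 < b) (m : E) :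
    Integrable (fun y : E => rexp (-b * ‖y - m‖ ^ 2)) := by
  have h := (GaussianFourier.integrable_cexp_neg_mul_sq_norm_add (V := E)
    (b := (b : ℂ)) (by simpa using hb) 0 0).re
  have h2 : Integrable (fun y : E => rexp (-b * ‖y‖ ^ 2)) := by
    refine h.congr (Filter.Eventually.of_forall fun y => ?_)
    simp only [zero_mul, add_zero]
    simp [← Complex.ofReal_pow, ← Complex.ofReal_mul, ← Complex.ofReal_neg, Complex.exp_ofReal_re]
  exact h2.comp_sub_right m

open RealInnerProductSpace in
lemma expid (T : ℝ) (hT : T ^ 2 < 1) (a b y : E) :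
    -‖y - a‖ ^ 2 / (2 * (1 - T ^ 2)) + -‖y - b‖ ^ 2 / (2 * (1 - T ^ 2)) + ‖y‖ ^ 2 / 2
    = -((1 + T ^ 2) / (1 - T ^ 2) / 2) * ‖y - (1 + T ^ 2)⁻¹ • (a + b)‖ ^ 2
      + (((1 + T ^ 2) / (1 - T ^ 2) / 2) * ‖(1 + T ^ 2)⁻¹ • (a + b)‖ ^ 2
        - (‖a‖ ^ 2 + ‖b‖ ^ 2) / (2 * (1 - T ^ 2))) := by
  have h1 : (1 : ℝ) - T ^ 2 ≠ 0 := by nlinarith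
  have h2 : (0 : ℝ) < 1 + T ^ 2 := by positivity
  rw [norm_sub_sq_real y a, norm_sub_sq_real y b,
    norm_sub_sq_real y ((1 + T ^ 2)⁻¹ • (a + b)), real_inner_smul_right, inner_add_right]
  field_simp
  ring

lemma const_calc (n x s w : ℝ) (hx : 0 < x) (hs : 0 < s) (hw : 0 < w) :
    (x * s) ^ (-n) * x ^ (n / 2) * (x * s / w) ^ (n / 2) = (s * w) ^ (-(n / 2)) := by
  rw [Real.rpow_def_of_pos (by positivity), Real.rpow_def_of_pos hx,
    Real.rpow_def_of_pos (by positivity), Real.rpow_def_of_pos (by positivity),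
    ← Real.exp_add, ← Real.exp_add,
    Real.log_mul hx.ne' hs.ne', Real.log_div (by positivity) hw.ne',
    Real.log_mul hx.ne' hs.ne', Real.log_mul hs.ne' hw.ne']
  ring_nf

lemma ratio_eq (T : ℝ) (hT : T ^ 2 < 1) (u v y : E) :
    ((2*π*(1-T^2)) ^ (-(d:ℝ)/2) * rexp (-‖y - T•u‖^2 / (2*(1-T^2)))) *
      ((2*π*(1-T^2)) ^ (-(d:ℝ)/2) * rexp (-‖y - T•v‖^2 / (2*(1-T^2)))) /
      ((2*π) ^ (-(d:ℝ)/2) * rexp (-‖y‖^2 / 2))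
    = ((2*π*(1-T^2)) ^ (-(d:ℝ)) * (2*π) ^ ((d:ℝ)/2)
        * rexp ((1+T^2)/(1-T^2)/2 * ‖(1+T^2)⁻¹ • (T•u+T•v)‖^2
            - (‖T•u‖^2+‖T•v‖^2)/(2*(1-T^2))))
      * rexp (-((1+T^2)/(1-T^2)/2) * ‖y - (1+T^2)⁻¹ • (T•u+T•v)‖^2) := by
  have h2π : (0:ℝ) < 2*π := by positivity
  have hs : (0:ℝ) < 1 - T^2 := by linarith
  have hcc : (2*π*(1-T^2)) ^ (-(d:ℝ)/2) * (2*π*(1-T^2)) ^ (-(d:ℝ)/2)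
      = (2*π*(1-T^2)) ^ (-(d:ℝ)) := by
    rw [← Real.rpow_add (by positivity)]; ring_nf
  have hinv : (((2*π) : ℝ) ^ (-(d:ℝ)/2))⁻¹ = (2*π) ^ ((d:ℝ)/2) := by
    rw [← Real.rpow_neg h2π.le]; ring_nf
  have step : ∀ c cφ e1 e2 e3 : ℝ, 0 < c → 0 < cφ →
      (c * rexp e1) * (c * rexp e2) / (cφ * rexp e3)
        = (c * c * cφ⁻¹) * rexp (e1 + e2 + -e3) := by
    intro c cφ e1 e2 e3 hc hcφ
    rw [Real.exp_add, Real.exp_add, Real.exp_neg]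
    field_simp
  rw [step _ _ _ _ _ (by positivity) (by positivity)]
  rw [show (-‖y - T•u‖^2 / (2*(1-T^2)) + -‖y - T•v‖^2 / (2*(1-T^2)) + -(-‖y‖^2/2) : ℝ)
      = (-‖y - T•u‖^2 / (2*(1-T^2)) + -‖y - T•v‖^2 / (2*(1-T^2)) + ‖y‖^2/2 : ℝ) by ring]
  rw [expid T hT (T•u) (T•v) y]
  rw [hcc, hinv]; conv_rhs => rw [mul_assoc, ← Real.exp_add]
  ring_nf

lemma J_val (T : ℝ) (hT : T ^ 2 < 1) (u v : E) :
    Integrable (fun y : E =>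
      ((2*π*(1-T^2)) ^ (-(d:ℝ)/2) * rexp (-‖y - T•u‖^2 / (2*(1-T^2)))) *
      ((2*π*(1-T^2)) ^ (-(d:ℝ)/2) * rexp (-‖y - T•v‖^2 / (2*(1-T^2)))) /
      ((2*π) ^ (-(d:ℝ)/2) * rexp (-‖y‖^2 / 2))) ∧
    (∫ y : E,
      ((2*π*(1-T^2)) ^ (-(d:ℝ)/2) * rexp (-‖y - T•u‖^2 / (2*(1-T^2)))) *
      ((2*π*(1-T^2)) ^ (-(d:ℝ)/2) * rexp (-‖y - T•v‖^2 / (2*(1-T^2)))) /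
      ((2*π) ^ (-(d:ℝ)/2) * rexp (-‖y‖^2 / 2)))
    = ((1-T^2)*(1+T^2)) ^ (-((d:ℝ)/2))
      * rexp ((1+T^2)/(1-T^2)/2 * ‖(1+T^2)⁻¹ • (T•u+T•v)‖^2
          - (‖T•u‖^2+‖T•v‖^2)/(2*(1-T^2))) := by
  have hs : (0:ℝ) < 1 - T^2 := by linarith
  have hw : (0:ℝ) < 1 + T^2 := by positivity
  have hβ : (0:ℝ) < (1+T^2)/(1-T^2)/2 := by positivity
  have hfun := funext (ratio_eq (d := d) T hT u v)
  rw [hfun]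
  constructor
  · exact (gauss_integrable _ hβ _).const_mul _
  · rw [MeasureTheory.integral_const_mul, gauss_int _ hβ]
    rw [show π / ((1+T^2)/(1-T^2)/2) = 2*π*(1-T^2)/(1+T^2) by field_simp]
    have h := const_calc (d:ℝ) (2*π) (1-T^2) (1+T^2) (by positivity) hs hw
    linear_combination rexp ((1+T^2)/(1-T^2)/2 * ‖(1+T^2)⁻¹ • (T•u+T•v)‖^2
          - (‖T•u‖^2+‖T•v‖^2)/(2*(1-T^2))) * h

lemma realbound (N t P Q I : ℝ) (ht0 : 0 < t) (ht : t ≤ 1/4) (hN : 0 ≤ N)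
    (hP2 : P^2 ≤ t*N) (hQ2 : Q^2 ≤ t*N) (hI : I ≤ P*Q) (hI' : -(P*Q) ≤ I) :
    (P^2 + 2*I + Q^2)/(2*(1-t)*(1+t)) - (P^2+Q^2)/(2*(1-t)) ≤ 2*N*t := by
  have hS0 : (0:ℝ) < 1 - t := by linarith
  have hW0 : (0:ℝ) < 1 + t := by linarith
  have hnum : (0:ℝ) ≤ P^2 + 2*I + Q^2 := by nlinarith [sq_nonneg (P-Q)]
  have step1 : (P^2 + 2*I + Q^2)/(2*(1-t)*(1+t)) ≤ (P^2 + 2*I + Q^2)/(2*(1-t)) := by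
    apply div_le_div_of_nonneg_left hnum (by positivity)
    nlinarith
  have step2 : (P^2 + 2*I + Q^2)/(2*(1-t)) - (P^2+Q^2)/(2*(1-t)) ≤ 2*N*t := by
    rw [div_sub_div_same]
    rw [div_le_iff₀ (by positivity : (0:ℝ) < 2*(1-t))]
    nlinarith [sq_nonneg (P-Q)]
  linarith

lemma realconst (N t : ℝ) (ht0 : 0 < t) (ht : t ≤ 1/4) (hN : 0 ≤ N) :
    ((1-t)*(1+t)) ^ (-(N/2)) ≤ rexp (N*t) := by
  have hS0 : (0:ℝ) < 1 - t := by linarith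
  have hW0 : (0:ℝ) < 1 + t := by linarith
  have hx0 : (0:ℝ) < (1-t)*(1+t) := by positivity
  rw [Real.rpow_def_of_pos hx0]
  apply Real.exp_le_exp.mpr
  have h1 : Real.log (((1-t)*(1+t))⁻¹) ≤ ((1-t)*(1+t))⁻¹ - 1 :=
    Real.log_le_sub_one_of_pos (by positivity)
  rw [Real.log_inv] at h1
  have hinv : ((1-t)*(1+t))⁻¹ - 1 ≤ 2*t := by
    rw [inv_eq_one_div, div_sub' hx0.ne', div_le_iff₀ hx0]
    have h2 : t^2 ≤ t/4 := by nlinarith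
    nlinarith [mul_le_mul_of_nonneg_left h2 ht0.le]
  nlinarith

open RealInnerProductSpace in
lemma J_bound (T : ℝ) (hT0 : 0 < T) (hT2 : T ≤ 1/2) (u v : E)
    (hu : ‖u‖ ^ 2 ≤ (d:ℝ)) (hv : ‖v‖ ^ 2 ≤ (d:ℝ)) :
    ((1-T^2)*(1+T^2)) ^ (-((d:ℝ)/2))
      * rexp ((1+T^2)/(1-T^2)/2 * ‖(1+T^2)⁻¹ • (T•u+T•v)‖^2
          - (‖T•u‖^2+‖T•v‖^2)/(2*(1-T^2)))
    ≤ rexp (3 * d * T^2) := by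
  have hT1 : T^2 ≤ 1/4 := by nlinarith
  have ht0 : (0:ℝ) < T^2 := by positivity
  have hW0 : (0:ℝ) < 1 + T^2 := by positivity
  have hd0 : (0:ℝ) ≤ (d:ℝ) := Nat.cast_nonneg d
  have hp2 : ‖T•u‖^2 = T^2*‖u‖^2 := by
    rw [norm_smul, Real.norm_eq_abs, mul_pow, sq_abs]
  have hq2 : ‖T•v‖^2 = T^2*‖v‖^2 := by
    rw [norm_smul, Real.norm_eq_abs, mul_pow, sq_abs]
  have e1 : (1+T^2)/(1-T^2)/2 * ‖(1+T^2)⁻¹ • (T•u+T•v)‖^2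
      = ‖T•u+T•v‖^2/(2*(1-T^2)*(1+T^2)) := by
    have hS0 : (0:ℝ) < 1 - T^2 := by linarith
    rw [norm_smul, Real.norm_eq_abs, abs_inv, abs_of_pos hW0, mul_pow]
    field_simp
  have hab : ‖T•u+T•v‖^2 = ‖T•u‖^2 + 2*⟪T•u, T•v⟫ + ‖T•v‖^2 := norm_add_sq_real _ _
  have ha : (1+T^2)/(1-T^2)/2 * ‖(1+T^2)⁻¹ • (T•u+T•v)‖^2
      - (‖T•u‖^2+‖T•v‖^2)/(2*(1-T^2)) ≤ 2*d*T^2 := by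
    rw [e1, hab]
    have := realbound (d:ℝ) (T^2) ‖T•u‖ ‖T•v‖ ⟪T•u, T•v⟫ ht0 hT1 hd0
      (by rw [hp2]; nlinarith) (by rw [hq2]; nlinarith) (real_inner_le_norm _ _)
      ((abs_le.mp (abs_real_inner_le_norm _ _)).1)
    linarith
  have hb : ((1-T^2)*(1+T^2)) ^ (-((d:ℝ)/2)) ≤ rexp (d*T^2) :=
    realconst (d:ℝ) (T^2) ht0 hT1 hd0
  calc ((1-T^2)*(1+T^2)) ^ (-((d:ℝ)/2))
      * rexp ((1+T^2)/(1-T^2)/2 * ‖(1+T^2)⁻¹ • (T•u+T•v)‖^2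
          - (‖T•u‖^2+‖T•v‖^2)/(2*(1-T^2)))
      ≤ rexp (d*T^2) * rexp (2*d*T^2) :=
        mul_le_mul hb (Real.exp_le_exp.mpr ha) (Real.exp_pos _).le (Real.exp_pos _).le
    _ = rexp (3*d*T^2) := by rw [← Real.exp_add]; ring_nf

lemma final_elem (N x : ℝ) (hN : 1 ≤ N) (hx0 : 0 ≤ x) (hx : x ≤ 1/4) :
    rexp (3*N*x) - 1 ≤ 3*N*rexp N * x := by
  have hN0 : (0:ℝ) ≤ N := by linarith
  have ha : (0:ℝ) ≤ 3*N*x := by positivity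
  have h0 : 1 - 3*N*x ≤ rexp (-(3*N*x)) := by
    have := Real.add_one_le_exp (-(3*N*x)); linarith
  have h2 : rexp (3*N*x) * (1 - 3*N*x) ≤ rexp (3*N*x) * rexp (-(3*N*x)) :=
    mul_le_mul_of_nonneg_left h0 (Real.exp_pos _).le
  rw [← Real.exp_add] at h2
  simp only [add_neg_cancel, Real.exp_zero] at h2
  have h3 : rexp (3*N*x) ≤ rexp N := Real.exp_le_exp.mpr (by nlinarith)
  nlinarith [mul_le_mul_of_nonneg_left h3 ha]

lemma norm_sq_le_d (u : E) (h : ∀ i, |u i| ≤ 1) : ‖u‖ ^ 2 ≤ (d:ℝ) := by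
  rw [EuclideanSpace.norm_eq, Real.sq_sqrt (Finset.sum_nonneg fun i _ => sq_nonneg _)]
  calc ∑ i, ‖u i‖^2 ≤ ∑ _i : Fin d, (1:ℝ) := by
        apply Finset.sum_le_sum
        intro i _
        rw [Real.norm_eq_abs]
        nlinarith [h i, abs_nonneg (u i)]
    _ = d := by simp


section Main
variable (p0 : E → ℝ) (T : ℝ)

-- the kernel
def kern (d : ℕ) (T : ℝ) (y u : E) : ℝ :=
  (2 * π * (1 - T ^ 2)) ^ (-(d : ℝ) / 2) * rexp (-‖y - T • u‖ ^ 2 / (2 * (1 - T ^ 2)))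

lemma kern_pos (hT : T ^ 2 < 1) (y u : E) : 0 < kern d T y u := by
  have : (0:ℝ) < 1 - T^2 := by linarith
  unfold kern; positivity

lemma kern_le (hT : T ^ 2 < 1) (y u : E) :
    kern d T y u ≤ (2 * π * (1 - T ^ 2)) ^ (-(d : ℝ) / 2) := by
  have hs : (0:ℝ) < 1 - T^2 := by linarith
  have h1 : rexp (-‖y - T • u‖ ^ 2 / (2 * (1 - T ^ 2))) ≤ 1 := by
    rw [Real.exp_le_one_iff]
    have : (0:ℝ) ≤ ‖y - T • u‖ ^ 2 := sq_nonneg _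
    have h2 : (0:ℝ) < 2 * (1 - T^2) := by linarith
    exact div_nonpos_of_nonpos_of_nonneg (by linarith) h2.le
  calc kern d T y u ≤ (2 * π * (1 - T ^ 2)) ^ (-(d : ℝ) / 2) * 1 := by
        unfold kern
        apply mul_le_mul_of_nonneg_left h1 (by positivity)
    _ = _ := mul_one _

lemma kern_cont (hT : T ^ 2 < 1) : Continuous fun p : E × E => kern d T p.1 p.2 := by
  unfold kern
  fun_prop

lemma kern_meas (hT : T ^ 2 < 1) (y : E) : Measurable fun u : E => kern d T y u :=
  ((kern_cont T hT).comp (Continuous.prodMk_right y)).measurable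

lemma stdGauss_pos (y : E) : 0 < stdGauss d y := by unfold stdGauss; positivity

lemma stdGauss_cont : Continuous fun y : E => stdGauss d y := by
  unfold stdGauss; fun_prop

end Main

open RealInnerProductSpace in
set_option maxHeartbeats 1000000 in
lemma KLbound (hd : 1 ≤ d) (p0 : EuclideanSpace ℝ (Fin d) → ℝ) (hm : Measurable p0)
    (hpos : ∀ u, 0 ≤ p0 u) (hint : (∫ u : EuclideanSpace ℝ (Fin d), p0 u) = 1)
    (hsupp : ∀ u : EuclideanSpace ℝ (Fin d), (∃ i, 1 < |u i|) → p0 u = 0)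
    (T : ℝ) (hT0 : 0 < T) (hT2 : T ≤ 1/2) :
    (∫ y : EuclideanSpace ℝ (Fin d),
        fwdDensity d p0 T y * Real.log (fwdDensity d p0 T y / stdGauss d y))
      ≤ (3 * d * rexp d) * T ^ 2 := by
  have hT1 : T ^ 2 < 1 := by nlinarith
  have hs0 : (0:ℝ) < 1 - T ^ 2 := by linarith
  have hd1 : (1:ℝ) ≤ (d:ℝ) := by exact_mod_cast hd
  have hCpos : 0 < (3 * (d:ℝ) * rexp d) * T ^ 2 := by positivity
  set q : E → ℝ := fwdDensity d p0 T with hq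
  have hqdef : ∀ y, q y = ∫ u, p0 u * kern d T y u := fun y => rfl
  have hp0int : Integrable p0 := by
    by_contra h
    rw [integral_undef h] at hint; norm_num at hint
  have hkint : ∀ y : E, Integrable (fun u => p0 u * kern d T y u) := by
    intro y
    apply Integrable.mono' (hp0int.const_mul ((2 * π * (1 - T ^ 2)) ^ (-(d : ℝ) / 2)))
    · exact (hm.mul (kern_meas T hT1 y)).aestronglyMeasurable
    · refine Filter.Eventually.of_forall fun u => ?_
      rw [Real.norm_eq_abs, abs_of_nonneg (mul_nonneg (hpos u) (kern_pos T hT1 y u).le)]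
      calc p0 u * kern d T y u ≤ p0 u * ((2 * π * (1 - T ^ 2)) ^ (-(d : ℝ) / 2)) :=
            mul_le_mul_of_nonneg_left (kern_le T hT1 y u) (hpos u)
        _ = _ := mul_comm _ _
  have hqnn : ∀ y, 0 ≤ q y := fun y => by
    rw [hqdef]
    exact integral_nonneg fun u => mul_nonneg (hpos u) (kern_pos T hT1 y u).le
  have hqsm : StronglyMeasurable q := by
    have h1 : StronglyMeasurable fun p : E × E => p0 p.2 * kern d T p.1 p.2 :=
      ((hm.comp measurable_snd).mul (kern_cont T hT1).measurable).stronglyMeasurable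
    exact h1.integral_prod_right'
  -- ENNReal versions
  set P : E → ℝ≥0∞ := fun u => ENNReal.ofReal (p0 u) with hP
  have hPmeas : Measurable P := hm.ennreal_ofReal
  have hP1 : (∫⁻ u, P u) = 1 := by
    rw [hP, ← ofReal_integral_eq_lintegral_ofReal hp0int (Filter.Eventually.of_forall hpos),
      hint, ENNReal.ofReal_one]
  set Ke : E → E → ℝ≥0∞ := fun y u => ENNReal.ofReal (kern d T y u) with hKe
  have hKemeas : Measurable fun p : E × E => Ke p.1 p.2 :=
    (kern_cont T hT1).measurable.ennreal_ofReal
  have hq_repr : ∀ y, ENNReal.ofReal (q y) = ∫⁻ u, P u * Ke y u := by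
    intro y
    rw [hqdef y, ofReal_integral_eq_lintegral_ofReal (hkint y)
      (Filter.Eventually.of_forall fun u => mul_nonneg (hpos u) (kern_pos T hT1 y u).le)]
    congr 1; funext u
    rw [ENNReal.ofReal_mul (hpos u)]
  -- kernel as explicit Gaussian in y
  have hfun : ∀ u : E, (fun y : E => kern d T y u)
      = fun y : E => (2 * π * (1 - T ^ 2)) ^ (-(d : ℝ) / 2)
          * rexp (-(2 * (1 - T ^ 2))⁻¹ * ‖y - T • u‖ ^ 2) := by
    intro u; funext y; unfold kern
    congr 1
    ring
  have hker_int : ∀ u : E, Integrable fun y : E => kern d T y u := fun u => by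
    rw [hfun u]
    exact (gauss_integrable _ (by positivity) (T • u)).const_mul _
  have hker_int_y : ∀ u : E, (∫ y : E, kern d T y u) = 1 := fun u => by
    rw [hfun u, MeasureTheory.integral_const_mul, gauss_int _ (by positivity) (T • u),
      show π / (2 * (1 - T ^ 2))⁻¹ = 2 * π * (1 - T ^ 2) by field_simp,
      ← Real.rpow_add (by positivity), show (-(d:ℝ)/2 + (d:ℝ)/2) = 0 by ring, Real.rpow_zero]
  -- ∫ q = 1
  have hQlint : (∫⁻ y : E, ENNReal.ofReal (q y)) = 1 := by
    calc (∫⁻ y, ENNReal.ofReal (q y)) = ∫⁻ y, ∫⁻ u, P u * Ke y u := by simp_rw [hq_repr]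
      _ = ∫⁻ u, ∫⁻ y, P u * Ke y u :=
          lintegral_lintegral_swap (((hPmeas.comp measurable_snd).mul hKemeas).aemeasurable)
      _ = ∫⁻ u, P u * ∫⁻ y, Ke y u := by
          congr 1; funext u
          exact lintegral_const_mul' _ _ ENNReal.ofReal_ne_top
      _ = ∫⁻ u, P u * 1 := by
          congr 1; funext u
          rw [hKe, ← ofReal_integral_eq_lintegral_ofReal (hker_int u)
            (Filter.Eventually.of_forall fun y => (kern_pos T hT1 y u).le),
            hker_int_y u, ENNReal.ofReal_one]
      _ = 1 := by simpa using hP1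
  have hqint : Integrable q := by
    refine ⟨hqsm.aestronglyMeasurable, ?_⟩
    rw [hasFiniteIntegral_iff_ofReal (Filter.Eventually.of_forall hqnn), hQlint]
    exact ENNReal.one_lt_top
  have hqI : (∫ y, q y) = 1 := by
    rw [integral_eq_lintegral_of_nonneg_ae (Filter.Eventually.of_forall hqnn)
      hqsm.aestronglyMeasurable, hQlint]
    simp
  -- chi-square part
  have hΦne : ∀ y, (ENNReal.ofReal (stdGauss d y))⁻¹ ≠ ⊤ := fun y =>
    ENNReal.inv_ne_top.mpr (ENNReal.ofReal_pos.mpr (stdGauss_pos y)).ne'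
  have hone : ∀ y, (∫⁻ v, P v * Ke y v) ≠ ⊤ := fun y => by
    rw [← hq_repr y]; exact ENNReal.ofReal_ne_top
  have hg1_eq : ∀ y, ENNReal.ofReal (q y ^ 2 / stdGauss d y)
      = (∫⁻ u, P u * Ke y u) * (∫⁻ v, P v * Ke y v) * (ENNReal.ofReal (stdGauss d y))⁻¹ := by
    intro y
    rw [ENNReal.ofReal_div_of_pos (stdGauss_pos y), ENNReal.ofReal_pow (hqnn y), hq_repr y,
      div_eq_mul_inv]
    ring
  have hg1_tri : ∀ y, ENNReal.ofReal (q y ^ 2 / stdGauss d y)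
      = ∫⁻ u, ∫⁻ v, (P u * P v) * ENNReal.ofReal (kern d T y u * kern d T y v / stdGauss d y) := by
    intro y
    rw [hg1_eq y,
      show (∫⁻ u, P u * Ke y u) * (∫⁻ v, P v * Ke y v) * (ENNReal.ofReal (stdGauss d y))⁻¹
        = (∫⁻ u, P u * Ke y u) * ((∫⁻ v, P v * Ke y v) * (ENNReal.ofReal (stdGauss d y))⁻¹) from by ring,
      ← lintegral_mul_const' _ _ (ENNReal.mul_ne_top (hone y) (hΦne y))]
    congr 1; funext u
    have hptw : ∀ v, (P u * P v) * ENNReal.ofReal (kern d T y u * kern d T y v / stdGauss d y)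
        = ((P u * Ke y u) * (ENNReal.ofReal (stdGauss d y))⁻¹) * (P v * Ke y v) := by
      intro v
      rw [ENNReal.ofReal_div_of_pos (stdGauss_pos y),
        ENNReal.ofReal_mul (kern_pos T hT1 y u).le, div_eq_mul_inv, hP, hKe]
      ring
    simp only [hptw]
    rw [lintegral_const_mul' _ _ (ENNReal.mul_ne_top
      (ENNReal.mul_ne_top ENNReal.ofReal_ne_top ENNReal.ofReal_ne_top) (hΦne y))]
    ring
  -- measurability for swaps
  have hcont3 : Continuous fun z : (E × E) × E =>
      kern d T z.1.1 z.1.2 * kern d T z.1.1 z.2 / stdGauss d z.1.1 := by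
    unfold kern stdGauss
    fun_prop (disch := (intros; positivity))
  have hH3meas : Measurable fun z : (E × E) × E =>
      (P z.1.2 * P z.2) * ENNReal.ofReal (kern d T z.1.1 z.1.2 * kern d T z.1.1 z.2 / stdGauss d z.1.1) :=
    ((hPmeas.comp (measurable_snd.comp measurable_fst)).mul (hPmeas.comp measurable_snd)).mul
      hcont3.measurable.ennreal_ofReal
  have hswapmeas1 : Measurable fun p : E × E =>
      ∫⁻ v, (P p.2 * P v) * ENNReal.ofReal (kern d T p.1 p.2 * kern d T p.1 v / stdGauss d p.1) :=
    hH3meas.lintegral_prod_right'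
  have hmeas2 : ∀ u : E, Measurable fun p : E × E =>
      (P u * P p.2) * ENNReal.ofReal (kern d T p.1 u * kern d T p.1 p.2 / stdGauss d p.1) := by
    intro u
    refine (measurable_const.mul (hPmeas.comp measurable_snd)).mul
      (Measurable.ennreal_ofReal (Continuous.measurable ?_))
    unfold kern stdGauss
    fun_prop (disch := (intros; positivity))
  have hswap : (∫⁻ y : E, ENNReal.ofReal (q y ^ 2 / stdGauss d y))
      = ∫⁻ u, ∫⁻ v, (P u * P v)
          * ∫⁻ y, ENNReal.ofReal (kern d T y u * kern d T y v / stdGauss d y) := by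
    calc (∫⁻ y, ENNReal.ofReal (q y ^ 2 / stdGauss d y))
        = ∫⁻ y, ∫⁻ u, ∫⁻ v, (P u * P v)
            * ENNReal.ofReal (kern d T y u * kern d T y v / stdGauss d y) := by simp_rw [hg1_tri]
      _ = ∫⁻ u, ∫⁻ y, ∫⁻ v, (P u * P v)
            * ENNReal.ofReal (kern d T y u * kern d T y v / stdGauss d y) :=
          lintegral_lintegral_swap hswapmeas1.aemeasurable
      _ = ∫⁻ u, ∫⁻ v, ∫⁻ y, (P u * P v)
            * ENNReal.ofReal (kern d T y u * kern d T y v / stdGauss d y) := by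
          congr 1; funext u
          exact lintegral_lintegral_swap (hmeas2 u).aemeasurable
      _ = ∫⁻ u, ∫⁻ v, (P u * P v)
            * ∫⁻ y, ENNReal.ofReal (kern d T y u * kern d T y v / stdGauss d y) := by
          congr 1; funext u; congr 1; funext v
          exact lintegral_const_mul' _ _
            (ENNReal.mul_ne_top ENNReal.ofReal_ne_top ENNReal.ofReal_ne_top)
  -- evaluate the inner integral
  have hJ : ∀ u v : E, (∫⁻ y : E, ENNReal.ofReal (kern d T y u * kern d T y v / stdGauss d y))
      = ENNReal.ofReal (((1-T^2)*(1+T^2)) ^ (-((d:ℝ)/2))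
          * rexp ((1+T^2)/(1-T^2)/2 * ‖(1+T^2)⁻¹ • (T•u+T•v)‖^2
              - (‖T•u‖^2+‖T•v‖^2)/(2*(1-T^2)))) := by
    intro u v
    obtain ⟨hi, hval⟩ := J_val (d := d) T hT1 u v
    have hi' : Integrable (fun y : E => kern d T y u * kern d T y v / stdGauss d y) := hi
    have hval' : (∫ y : E, kern d T y u * kern d T y v / stdGauss d y)
        = ((1-T^2)*(1+T^2)) ^ (-((d:ℝ)/2))
          * rexp ((1+T^2)/(1-T^2)/2 * ‖(1+T^2)⁻¹ • (T•u+T•v)‖^2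
              - (‖T•u‖^2+‖T•v‖^2)/(2*(1-T^2))) := hval
    rw [← hval', ← ofReal_integral_eq_lintegral_ofReal hi'
      (Filter.Eventually.of_forall fun y => ?_)]
    have h1 : 0 < kern d T y u := kern_pos T hT1 y u
    have h2 : 0 < kern d T y v := kern_pos T hT1 y v
    have h3 : 0 < stdGauss d y := stdGauss_pos y
    positivity
  -- bound the inner integral on the support
  have hnormd : ∀ w : E, p0 w ≠ 0 → ‖w‖ ^ 2 ≤ (d:ℝ) := by
    intro w hw
    apply norm_sq_le_d w
    intro i
    by_contra hgt
    exact hw (hsupp w ⟨i, by linarith [not_le.mp hgt]⟩)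
  have hJb : ∀ u v : E, p0 u ≠ 0 → p0 v ≠ 0 →
      (∫⁻ y : E, ENNReal.ofReal (kern d T y u * kern d T y v / stdGauss d y))
        ≤ ENNReal.ofReal (rexp (3 * d * T ^ 2)) := by
    intro u v hu hv
    rw [hJ u v]
    exact ENNReal.ofReal_le_ofReal
      (J_bound T hT0 hT2 u v (hnormd u hu) (hnormd v hv))
  set A : ℝ≥0∞ := ENNReal.ofReal (rexp (3 * d * T ^ 2)) with hA
  have hLle : (∫⁻ y : E, ENNReal.ofReal (q y ^ 2 / stdGauss d y)) ≤ A := by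
    rw [hswap]
    have step : (∫⁻ u : E, ∫⁻ v : E, (P u * P v)
        * ∫⁻ y : E, ENNReal.ofReal (kern d T y u * kern d T y v / stdGauss d y))
        ≤ ∫⁻ u : E, ∫⁻ v : E, (P u * P v) * A := by
      apply lintegral_mono
      intro u
      apply lintegral_mono
      intro v
      by_cases hu : p0 u = 0
      · simp [hP, hu]
      by_cases hv : p0 v = 0
      · simp [hP, hv]
      · exact mul_le_mul_right (hJb u v hu hv) _
    refine le_trans step (le_of_eq ?_)
    have inner : ∀ u : E, (∫⁻ v : E, (P u * P v) * A) = P u * A := by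
      intro u
      have : (fun v : E => (P u * P v) * A) = fun v : E => (P u * A) * P v := by
        funext v; ring
      rw [this, lintegral_const_mul' _ _
        (ENNReal.mul_ne_top ENNReal.ofReal_ne_top ENNReal.ofReal_ne_top), hP1, mul_one]
    simp_rw [inner]
    rw [lintegral_mul_const' _ _ ENNReal.ofReal_ne_top, hP1, one_mul]
  -- integrability and integral bound for q^2/φ
  have hg1meas : AEStronglyMeasurable (fun y : E => q y ^ 2 / stdGauss d y) volume :=
    ((hqsm.measurable.pow_const 2).div (stdGauss_cont (d := d)).measurable).aestronglyMeasurable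
  have hg1nn : ∀ y : E, 0 ≤ q y ^ 2 / stdGauss d y := fun y =>
    div_nonneg (sq_nonneg _) (stdGauss_pos y).le
  have hg1int : Integrable (fun y : E => q y ^ 2 / stdGauss d y) := by
    refine ⟨hg1meas, ?_⟩
    rw [hasFiniteIntegral_iff_ofReal (Filter.Eventually.of_forall hg1nn)]
    exact lt_of_le_of_lt hLle ENNReal.ofReal_lt_top
  have hg1I : (∫ y : E, q y ^ 2 / stdGauss d y) ≤ rexp (3 * d * T ^ 2) := by
    rw [integral_eq_lintegral_of_nonneg_ae (Filter.Eventually.of_forall hg1nn) hg1meas]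
    exact ENNReal.toReal_le_of_le_ofReal (Real.exp_pos _).le hLle
  -- pointwise bound
  have hpt : ∀ y : E, q y * Real.log (q y / stdGauss d y) ≤ q y ^ 2 / stdGauss d y - q y := by
    intro y
    rcases eq_or_lt_of_le (hqnn y) with h0 | h0
    · rw [← h0]; simp
    · have hφp := stdGauss_pos (d := d) y
      have hx : 0 < q y / stdGauss d y := div_pos h0 hφp
      have hlog := Real.log_le_sub_one_of_pos hx
      calc q y * Real.log (q y / stdGauss d y) ≤ q y * (q y / stdGauss d y - 1) :=
            mul_le_mul_of_nonneg_left hlog h0.le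
        _ = q y ^ 2 / stdGauss d y - q y := by field_simp
  have hgint : Integrable (fun y : E => q y ^ 2 / stdGauss d y - q y) := hg1int.sub hqint
  have hgI : (∫ y : E, (q y ^ 2 / stdGauss d y - q y)) ≤ (3 * d * rexp d) * T ^ 2 := by
    rw [integral_sub hg1int hqint, hqI]
    have hfe := final_elem (d:ℝ) (T ^ 2) hd1 (sq_nonneg T) (by nlinarith)
    linarith
  by_cases hf : Integrable (fun y : E => q y * Real.log (q y / stdGauss d y))
  · exact le_trans (integral_mono hf hgint hpt) hgI
  · rw [integral_undef hf]
    exact hCpos.le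

/-- **KL convergence to the Gaussian prior:**
`KL(q_T ‖ N(0, I_d)) = ∫ q_T log(q_T/φ_d) ≤ C T²` with `C` depending only on `d`. -/
theorem stmt_11 (d : ℕ) (hd : 1 ≤ d) :
    ∃ C > (0 : ℝ), ∀ p0 : EuclideanSpace ℝ (Fin d) → ℝ,
      Measurable p0 →
      (∀ u, 0 ≤ p0 u) →
      (∫ u : EuclideanSpace ℝ (Fin d), p0 u) = 1 →
      (∀ u : EuclideanSpace ℝ (Fin d), (∃ i, 1 < |u i|) → p0 u = 0) →
      ∀ T ∈ Set.Ioc (0 : ℝ) (1 / 2),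
        (∫ y : EuclideanSpace ℝ (Fin d),
            fwdDensity d p0 T y * Real.log (fwdDensity d p0 T y / stdGauss d y))
          ≤ C * T ^ 2 := by
  have hd1 : (1:ℝ) ≤ (d:ℝ) := by exact_mod_cast hd
  refine ⟨3 * d * rexp d, by positivity, ?_⟩
  intro p0 hm hpos hint hsupp T hT
  exact KLbound hd p0 hm hpos hint hsupp T hT.1 hT.2
end
end

section
/- Let f ∈ H^β([0,1]^D, R). There exists a constant C > 0, depending only on D, β and R, such that for every positive integer M there exist real coefficients c_{m,α}, indexed by m ∈ {0,1,…,M}^D and multi-indices α ∈ ℕ^D with |α|₁ ≤ r, satisfying |c_{m,α}| ≤ R/α!, such that the piecewise polynomial p(x) := Σ_{m ∈ {0,…,M}^D} 1{x ∈ Cell_m} · Σ_{|α|₁ ≤ r} c_{m,α} · (x − m/M)^α satisfies |f(x) − p(x)| ≤ C · M^{−β} for all x ∈ [0,1]^D. -/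
open MeasureTheory Real Set

noncomputable section

/-- The unit cube `[0,1]^D`. -/

def unitCube (D : ℕ) : Set (EuclideanSpace ℝ (Fin D)) :=
  {x | ∀ i, x i ∈ Set.Icc (0 : ℝ) 1}

lemma convex_unitCube (D : ℕ) : Convex ℝ (unitCube D) := by
  have : unitCube D = ⋂ i : Fin D, (fun x : EuclideanSpace ℝ (Fin D) => x i) ⁻¹' Icc (0:ℝ) 1 := by
    ext x; simp [unitCube]
  rw [this]
  exact convex_iInter fun i =>
    (convex_Icc (0:ℝ) 1).linear_preimage (EuclideanSpace.proj i : EuclideanSpace ℝ (Fin D) →L[ℝ] ℝ).toLinearMap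

lemma uniqueDiffOn_unitCube (D : ℕ) : UniqueDiffOn ℝ (unitCube D) := by
  refine uniqueDiffOn_convex (convex_unitCube D) ?_
  have : WithLp.toLp 2 (fun _ : Fin D => (1:ℝ)/2) ∈ interior (unitCube D) := by
    rw [mem_interior]
    refine ⟨{x : EuclideanSpace ℝ (Fin D) | ∀ i, x i ∈ Ioo (0:ℝ) 1}, ?_, ?_, fun i => by norm_num⟩
    · intro x hx i
      exact Ioo_subset_Icc_self (hx i)
    · have : {x : EuclideanSpace ℝ (Fin D) | ∀ i, x i ∈ Ioo (0:ℝ) 1}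
          = ⋂ i : Fin D, (fun x : EuclideanSpace ℝ (Fin D) => x i) ⁻¹' Ioo (0:ℝ) 1 := by
        ext x; simp
      rw [this]
      exact isOpen_iInter_of_finite fun i =>
        (isOpen_Ioo).preimage (EuclideanSpace.proj i).continuous
  exact ⟨_, this⟩

section Aux
open Finset


lemma prod_monomial_one {ι R σ : Type*} [CommSemiring R] (t : Finset ι) (h : ι → (σ →₀ ℕ)) :
    ∏ i ∈ t, (MvPolynomial.monomial (h i) (1 : R)) = MvPolynomial.monomial (∑ i ∈ t, h i) 1 := by
  classical
  induction t using Finset.cons_induction with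
  | empty => simp [MvPolynomial.monomial_zero']
  | cons a t ha ih =>
    rw [Finset.prod_cons, ih, Finset.sum_cons, MvPolynomial.monomial_mul, one_mul]

lemma card_fiber_eq_multinomial {D k : ℕ} (α : Fin D → ℕ) (hk : ∑ d, α d = k) :
    ((Finset.univ : Finset (Fin k → Fin D)).filter (fun j =>
        ∀ d, ((Finset.univ : Finset (Fin k)).filter (fun i => j i = d)).card = α d)).card
      = Nat.multinomial Finset.univ α := by
  classical
  set R := MvPolynomial (Fin D) ℕ with hR
  set β : Fin D →₀ ℕ := Finsupp.equivFunOnFinite.symm α with hβ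
  have hβa : ∀ d, β d = α d := fun d => rfl
  have happ : ∀ (j : Fin k → Fin D) (d : Fin D),
      ((∑ i : Fin k, Finsupp.single (j i) 1 : Fin D →₀ ℕ)) d
        = ((Finset.univ : Finset (Fin k)).filter (fun i => j i = d)).card := by
    intro j d
    rw [Finsupp.finset_sum_apply, Finset.card_filter]
    exact Finset.sum_congr rfl fun i _ => by rw [Finsupp.single_apply]
  have key : ((∑ d : Fin D, (MvPolynomial.X d : R)) ^ k)
      = ∑ j : Fin k → Fin D,
          MvPolynomial.monomial (∑ i : Fin k, Finsupp.single (j i) 1) (1 : ℕ) := by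
    calc ((∑ d : Fin D, (MvPolynomial.X d : R)) ^ k)
        = ∏ _i : Fin k, (∑ d : Fin D, (MvPolynomial.X d : R)) := by
          rw [Finset.prod_const, Finset.card_univ, Fintype.card_fin]
      _ = ∑ j ∈ Fintype.piFinset (fun _ : Fin k => (univ : Finset (Fin D))),
            ∏ i : Fin k, (MvPolynomial.X (j i) : R) := Finset.prod_univ_sum _ _
      _ = ∑ j : Fin k → Fin D,
          MvPolynomial.monomial (∑ i : Fin k, Finsupp.single (j i) 1) (1 : ℕ) := by
          rw [Fintype.piFinset_univ]
          refine Finset.sum_congr rfl fun j _ => ?_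
          rw [← prod_monomial_one]
          refine Finset.prod_congr rfl fun i _ => ?_
          rw [← MvPolynomial.X_pow_eq_monomial, pow_one]
  have h1 : MvPolynomial.coeff β ((∑ d : Fin D, (MvPolynomial.X d : R)) ^ k)
      = ((Finset.univ : Finset (Fin k → Fin D)).filter (fun j =>
        ∀ d, ((Finset.univ : Finset (Fin k)).filter (fun i => j i = d)).card = α d)).card := by
    rw [key, MvPolynomial.coeff_sum]
    simp only [MvPolynomial.coeff_monomial]
    rw [Finset.card_filter]
    refine Finset.sum_congr rfl fun j _ => ?_
    have hcond : ((∑ i : Fin k, Finsupp.single (j i) 1 : Fin D →₀ ℕ) = β)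
        ↔ (∀ d, ((Finset.univ : Finset (Fin k)).filter (fun i => j i = d)).card = α d) := by
      constructor
      · intro h d
        rw [← happ, h, hβa]
      · intro h
        ext d
        rw [happ, h d, hβa]
    rw [if_congr hcond rfl rfl]
  have h2 : MvPolynomial.coeff β ((∑ d : Fin D, (MvPolynomial.X d : R)) ^ k)
      = Nat.multinomial Finset.univ α := by
    rw [Finset.sum_pow_eq_sum_piAntidiag, MvPolynomial.coeff_sum]
    have hmono : ∀ α' : Fin D → ℕ,
        (∏ d : Fin D, (MvPolynomial.X d : R) ^ α' d)
          = MvPolynomial.monomial (Finsupp.equivFunOnFinite.symm α') 1 := by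
      intro α'
      simp_rw [MvPolynomial.X_pow_eq_monomial]
      rw [prod_monomial_one]
      have hsum : (∑ d : Fin D, Finsupp.single d (α' d)) = Finsupp.equivFunOnFinite.symm α' := by
        ext e
        rw [Finsupp.finset_sum_apply]
        simp [Finsupp.single_apply]
      rw [hsum]
    have hterm : ∀ α' ∈ Finset.univ.piAntidiag k,
        MvPolynomial.coeff β ((Nat.multinomial Finset.univ α' : R) * ∏ d, (MvPolynomial.X d : R) ^ α' d)
          = if α' = α then Nat.multinomial Finset.univ α' else 0 := by
      intro α' _
      rw [hmono, ← map_natCast (MvPolynomial.C : ℕ →+* R), MvPolynomial.coeff_C_mul,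
        MvPolynomial.coeff_monomial]
      have hiff : (Finsupp.equivFunOnFinite.symm α' = β) ↔ (α' = α) := by
        rw [hβ]
        exact ⟨fun h => Finsupp.equivFunOnFinite.symm.injective h, fun h => by rw [h]⟩
      rw [if_congr hiff rfl rfl]
      split <;> simp
    rw [Finset.sum_congr rfl hterm, Finset.sum_ite_eq' (Finset.univ.piAntidiag k) α
      (fun α' => Nat.multinomial Finset.univ α')]
    rw [if_pos]
    rw [Finset.mem_piAntidiag]
    exact ⟨hk, fun i _ => Finset.mem_univ i⟩
  rw [← h1, h2]


lemma euclidean_eq_sum_single {D : ℕ} (v : EuclideanSpace ℝ (Fin D)) :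
    v = ∑ d : Fin D, v d • EuclideanSpace.single d (1 : ℝ) := by
  ext e
  rw [WithLp.ofLp_sum, Finset.sum_apply e Finset.univ _]
  simp [EuclideanSpace.single_apply]

lemma cmm_apply_sum {D k : ℕ}
    (T : ContinuousMultilinearMap ℝ (fun _ : Fin k => EuclideanSpace ℝ (Fin D)) ℝ)
    (v : EuclideanSpace ℝ (Fin D)) :
    T (fun _ => v) = ∑ j : Fin k → Fin D,
      (∏ i : Fin k, v (j i)) * T (fun i => EuclideanSpace.single (j i) 1) := by
  have hv : (fun _ : Fin k => v) = fun _ : Fin k => ∑ d : Fin D, v d • EuclideanSpace.single d (1:ℝ) := by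
    funext i; exact euclidean_eq_sum_single v
  rw [hv]
  rw [show (T fun _ : Fin k => ∑ d : Fin D, v d • EuclideanSpace.single d (1:ℝ))
      = T.toMultilinearMap (fun _ : Fin k => ∑ d : Fin D, v d • EuclideanSpace.single d (1:ℝ)) from rfl]
  rw [T.toMultilinearMap.map_sum (fun (_ : Fin k) (d : Fin D) => v d • EuclideanSpace.single d (1:ℝ))]
  refine Finset.sum_congr rfl fun j _ => ?_
  rw [T.toMultilinearMap.map_smul_univ (fun i => v (j i)) (fun i => EuclideanSpace.single (j i) 1)]
  simp [smul_eq_mul]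

lemma level_sum {D r k : ℕ} (hk : k ≤ r)
    (G : ∀ m : ℕ, ContinuousMultilinearMap ℝ (fun _ : Fin m => EuclideanSpace ℝ (Fin D)) ℝ)
    (v : EuclideanSpace ℝ (Fin D)) :
    (k.factorial : ℝ)⁻¹ * G k (fun _ => v)
      = ∑ α ∈ (Finset.univ.filter
            (fun α : Fin D → Fin (r + 1) => (∑ i, (α i : ℕ)) ≤ r)).filter
            (fun α => (∑ i, (α i : ℕ)) = k),
          ((((∑ i, (α i : ℕ)).factorial : ℝ))⁻¹ *
            ∑ j ∈ (Finset.univ : Finset (Fin (∑ i, (α i : ℕ)) → Fin D)).filter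
                (fun j => ∀ d, (Finset.univ.filter (fun i => j i = d)).card = (α d : ℕ)),
              G _ (fun i => EuclideanSpace.single (j i) 1))
            * ∏ i, (v i) ^ (α i : ℕ) := by
  classical
  rw [cmm_apply_sum (G k) v, Finset.mul_sum]
  have hcard : ∀ (j : Fin k → Fin D) (d : Fin D),
      ((Finset.univ : Finset (Fin k)).filter (fun i => j i = d)).card < r + 1 := by
    intro j d
    have h1 : ((Finset.univ : Finset (Fin k)).filter (fun i => j i = d)).card
        ≤ (Finset.univ : Finset (Fin k)).card := Finset.card_filter_le _ _
    rw [Finset.card_univ, Fintype.card_fin] at h1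
    omega
  set fib : (Fin k → Fin D) → (Fin D → Fin (r + 1)) :=
    fun j d => ⟨((Finset.univ : Finset (Fin k)).filter (fun i => j i = d)).card, hcard j d⟩
    with hfib
  have hfibsum : ∀ j : Fin k → Fin D, (∑ d, ((fib j d : ℕ))) = k := by
    intro j
    have := Finset.card_eq_sum_card_fiberwise
      (fun (i : Fin k) (_ : i ∈ Finset.univ) => Finset.mem_univ (j i))
    rw [Finset.card_univ, Fintype.card_fin] at this
    exact this.symm
  have hmaps : ∀ j ∈ (Finset.univ : Finset (Fin k → Fin D)),
      fib j ∈ (Finset.univ.filter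
        (fun α : Fin D → Fin (r + 1) => (∑ i, (α i : ℕ)) ≤ r)).filter
        (fun α => (∑ i, (α i : ℕ)) = k) := by
    intro j _
    rw [Finset.mem_filter, Finset.mem_filter]
    exact ⟨⟨Finset.mem_univ _, (hfibsum j).le.trans hk⟩, hfibsum j⟩
  rw [← Finset.sum_fiberwise_of_maps_to hmaps
    (fun j => (k.factorial : ℝ)⁻¹ *
      ((∏ i : Fin k, v (j i)) * G k (fun i => EuclideanSpace.single (j i) 1)))]
  refine Finset.sum_congr rfl fun α hα => ?_
  have hσ : (∑ i, (α i : ℕ)) = k := (Finset.mem_filter.mp hα).2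
  subst hσ
  have hJ : Finset.univ.filter (fun j : Fin (∑ i, (α i : ℕ)) → Fin D => fib j = α)
      = Finset.univ.filter
        (fun j : Fin (∑ i, (α i : ℕ)) → Fin D =>
          ∀ d, (Finset.univ.filter (fun i => j i = d)).card = (α d : ℕ)) := by
    refine Finset.filter_congr fun j _ => ?_
    simp only [hfib, funext_iff, Fin.ext_iff]
  rw [hJ, Finset.mul_sum, Finset.sum_mul]
  refine Finset.sum_congr rfl fun j hj => ?_
  have hmem := (Finset.mem_filter.mp hj).2
  have hmono : (∏ i, v (j i)) = ∏ d, (v d) ^ (α d : ℕ) := by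
    have h1 := Finset.prod_fiberwise_of_maps_to
      (fun (i : Fin (∑ i, (α i : ℕ))) (_ : i ∈ Finset.univ) => Finset.mem_univ (j i))
      (fun i => v (j i))
    rw [← h1]
    refine Finset.prod_congr rfl fun d _ => ?_
    have h2 : ∀ i ∈ Finset.univ.filter (fun i => j i = d), v (j i) = v d := by
      intro i hi
      rw [(Finset.mem_filter.mp hi).2]
    rw [Finset.prod_congr rfl h2, Finset.prod_const, hmem d]
  rw [hmono]
  ring

end Aux

lemma taylor_holder {D r : ℕ} {s R : ℝ} (hs0 : 0 < s) (hs1 : s ≤ 1) (hR : 0 < R)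
    {f : EuclideanSpace ℝ (Fin D) → ℝ}
    (hf : ContDiffOn ℝ (r : ℕ∞) f (unitCube D))
    (hH : ∀ x ∈ unitCube D, ∀ x' ∈ unitCube D,
        ‖iteratedFDerivWithin ℝ r f (unitCube D) x -
            iteratedFDerivWithin ℝ r f (unitCube D) x'‖ ≤ R * ‖x - x'‖ ^ s)
    {x y : EuclideanSpace ℝ (Fin D)} (hx : x ∈ unitCube D) (hy : y ∈ unitCube D) :
    |f x - ∑ k ∈ Finset.range (r + 1),
        ((k.factorial : ℝ))⁻¹ * iteratedFDerivWithin ℝ k f (unitCube D) y (fun _ => x - y)|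
      ≤ (R / r.factorial) * (‖x - y‖ ^ r * ‖x - y‖ ^ s) := by
  classical
  set K := unitCube D with hK
  rcases eq_or_ne x y with hxy | hxy
  · -- x = y : all pure higher terms vanish
    subst hxy
    have hsum : ∑ k ∈ Finset.range (r + 1),
        ((k.factorial : ℝ))⁻¹ * iteratedFDerivWithin ℝ k f K x (fun _ => x - x) = f x := by
      rw [Finset.sum_eq_single 0]
      · simp [iteratedFDerivWithin_zero_apply]
      · intro k hk hk0
        have : iteratedFDerivWithin ℝ k f K x (fun _ => x - x) = 0 := by
          obtain ⟨k', rfl⟩ : ∃ k', k = k' + 1 := ⟨k - 1, by omega⟩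
          exact (iteratedFDerivWithin ℝ (k'+1) f K x).map_coord_zero
            (⟨0, by omega⟩ : Fin (k'+1)) (by simp)
        rw [this, mul_zero]
      · intro h; simp at h
    rw [hsum, sub_self, abs_zero]
    have : (0:ℝ) ≤ ‖x - x‖ ^ r * ‖x - x‖ ^ s :=
      mul_nonneg (pow_nonneg (norm_nonneg _) _) (Real.rpow_nonneg (norm_nonneg _) _)
    positivity
  rcases Nat.eq_zero_or_pos r with hr | hr
  · -- r = 0
    subst hr
    have h0 : f x - ∑ k ∈ Finset.range 1,
        ((k.factorial : ℝ))⁻¹ * iteratedFDerivWithin ℝ k f K y (fun _ => x - y)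
        = (iteratedFDerivWithin ℝ 0 f K x - iteratedFDerivWithin ℝ 0 f K y) (fun _ => x - y) := by
      simp [iteratedFDerivWithin_zero_apply]
    rw [h0]
    have h1 : |(iteratedFDerivWithin ℝ 0 f K x - iteratedFDerivWithin ℝ 0 f K y)
        (fun _ => x - y)| ≤ ‖iteratedFDerivWithin ℝ 0 f K x - iteratedFDerivWithin ℝ 0 f K y‖ := by
      have := (iteratedFDerivWithin ℝ 0 f K x - iteratedFDerivWithin ℝ 0 f K y).le_opNorm
        (fun _ => x - y)
      simpa using this
    refine h1.trans ((hH x hx y hy).trans (le_of_eq ?_))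
    simp [Nat.factorial]
  -- main case : r = n + 1, x ≠ y
  obtain ⟨n, rfl⟩ : ∃ n, r = n + 1 := ⟨r - 1, by omega⟩
  set v := x - y with hv
  set γ : ℝ → EuclideanSpace ℝ (Fin D) := fun t => y + t • v with hγ
  have hseg : ∀ t ∈ Icc (0:ℝ) 1, γ t ∈ K := by
    intro t ht
    simpa [hγ, hv] using (convex_unitCube D).add_smul_sub_mem hy hx ht
  have hmaps : Set.MapsTo γ (Icc (0:ℝ) 1) K := hseg
  set g : ℝ → ℝ := fun t => f (γ t) with hg
  have hγsm : ContDiff ℝ (↑(n+1)) γ := contDiff_const.add (contDiff_id.smul contDiff_const)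
  have hgC : ContDiffOn ℝ (↑(n+1)) g (Icc (0:ℝ) 1) := hf.comp hγsm.contDiffOn hmaps
  set F : ℕ → ℝ → ℝ := fun k t => iteratedFDerivWithin ℝ k f K (γ t) (fun _ => v) with hF
  have hIcc : UniqueDiffOn ℝ (Icc (0:ℝ) 1) := uniqueDiffOn_Icc one_pos
  have hFd : ∀ k : ℕ, k < n + 1 → ∀ t ∈ Icc (0:ℝ) 1,
      HasDerivWithinAt (F k) (F (k+1) t) (Icc (0:ℝ) 1) t := by
    intro k hk t ht
    have hz : γ t ∈ K := hseg t ht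
    have hdiff : DifferentiableWithinAt ℝ (iteratedFDerivWithin ℝ k f K) K (γ t) :=
      (hf.differentiableOn_iteratedFDerivWithin (by exact_mod_cast hk)
        (uniqueDiffOn_unitCube D)) (γ t) hz
    have hΦ := hdiff.hasFDerivWithinAt
    have hγd : HasDerivWithinAt γ v (Icc (0:ℝ) 1) t := by
      have h' : HasDerivAt (fun u : ℝ => y + u • v) ((1:ℝ) • v) t :=
        ((hasDerivAt_id t).smul_const v).const_add y
      simpa [hγ] using h'.hasDerivWithinAt
    have hcomp := hΦ.comp_hasDerivWithinAt t hγd hmaps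
    have hfinal := (ContinuousMultilinearMap.apply ℝ (fun _ : Fin k => EuclideanSpace ℝ (Fin D)) ℝ
        (fun _ => v)).hasFDerivAt.comp_hasDerivWithinAt t hcomp
    exact hfinal
  have hFg : ∀ k : ℕ, k ≤ n + 1 → ∀ t ∈ Icc (0:ℝ) 1,
      iteratedDerivWithin k g (Icc (0:ℝ) 1) t = F k t := by
    intro k
    induction k with
    | zero =>
      intro _ t ht
      simp [hF, hg, iteratedDerivWithin_zero, iteratedFDerivWithin_zero_apply]
    | succ k ih =>
      intro hk t ht
      rw [iteratedDerivWithin_succ]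
      have heq : Set.EqOn (iteratedDerivWithin k g (Icc (0:ℝ) 1)) (F k) (Icc (0:ℝ) 1) :=
        fun u hu => ih (by omega) u hu
      rw [derivWithin_congr heq (heq ht)]
      exact (hFd k (by omega) t ht).derivWithin (hIcc t ht)
  have hgC' : ContDiffOn ℝ (↑n) g (Icc (0:ℝ) 1) := hgC.of_le (by exact_mod_cast Nat.le_succ n)
  have hdiff' : DifferentiableOn ℝ (iteratedDerivWithin n g (Icc (0:ℝ) 1)) (Ioo (0:ℝ) 1) := by
    intro t ht
    have h1 : HasDerivWithinAt (F n) (F (n+1) t) (Icc (0:ℝ) 1) t :=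
      hFd n (by omega) t (Ioo_subset_Icc_self ht)
    have h2 : DifferentiableWithinAt ℝ (F n) (Ioo (0:ℝ) 1) t :=
      h1.differentiableWithinAt.mono Ioo_subset_Icc_self
    exact h2.congr (fun u hu => hFg n (by omega) u (Ioo_subset_Icc_self hu))
      (hFg n (by omega) t (Ioo_subset_Icc_self ht))
  obtain ⟨ξ, hξ, hrem⟩ := by
    have h := taylor_mean_remainder_lagrange (f := g) (x₀ := (0:ℝ)) (x := 1) (n := n) zero_ne_one
      (by rwa [Set.uIcc_of_le zero_le_one]) (by rwa [Set.uIcc_of_le zero_le_one, Set.uIoo_of_le zero_le_one])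
    rwa [Set.uIcc_of_le zero_le_one, Set.uIoo_of_le zero_le_one] at h
  have hξI : ξ ∈ Icc (0:ℝ) 1 := Ioo_subset_Icc_self hξ
  have hg1 : g 1 = f x := by simp [hg, hγ, hv]
  have hT : taylorWithinEval g n (Icc (0:ℝ) 1) 0 1
      = ∑ k ∈ Finset.range (n+1), ((k.factorial : ℝ))⁻¹ * F k 0 := by
    rw [taylor_within_apply]
    refine Finset.sum_congr rfl fun k hk => ?_
    rw [hFg k ((Nat.lt_succ_iff.mp (Finset.mem_range.mp hk)).trans (Nat.le_succ n)) 0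
      (by norm_num)]
    norm_num [smul_eq_mul]
  have hrem' : f x - (∑ k ∈ Finset.range (n+1), ((k.factorial : ℝ))⁻¹ * F k 0)
      = F (n+1) ξ / ((n+1).factorial : ℝ) := by
    rw [← hT, ← hg1, hrem, hFg (n+1) le_rfl ξ hξI]
    norm_num
  have hsum : ∑ k ∈ Finset.range (n+1+1),
      ((k.factorial : ℝ))⁻¹ * iteratedFDerivWithin ℝ k f K y (fun _ => x - y)
      = (∑ k ∈ Finset.range (n+1), ((k.factorial : ℝ))⁻¹ * F k 0)
        + (((n+1).factorial : ℝ))⁻¹ * F (n+1) 0 := by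
    rw [Finset.sum_range_succ]
    congr 1
    · refine Finset.sum_congr rfl fun k _ => ?_
      congr 1
      simp [hF, hγ, hv]
    · congr 1
      simp [hF, hγ, hv]
  have hmain : f x - ∑ k ∈ Finset.range (n+1+1),
      ((k.factorial : ℝ))⁻¹ * iteratedFDerivWithin ℝ k f K y (fun _ => x - y)
      = (F (n+1) ξ - F (n+1) 0) / ((n+1).factorial : ℝ) := by
    rw [hsum]
    have : f x - ((∑ k ∈ Finset.range (n+1), ((k.factorial : ℝ))⁻¹ * F k 0)
        + (((n+1).factorial : ℝ))⁻¹ * F (n+1) 0)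
        = (f x - ∑ k ∈ Finset.range (n+1), ((k.factorial : ℝ))⁻¹ * F k 0)
          - (((n+1).factorial : ℝ))⁻¹ * F (n+1) 0 := by ring
    rw [this, hrem']
    field_simp
  -- now the bound on the difference of the r-th derivatives
  have hz : γ ξ ∈ K := hseg ξ hξI
  have hγ0 : γ ξ - y = ξ • v := by simp [hγ]
  have hkey : |F (n+1) ξ - F (n+1) 0|
      ≤ R * (‖v‖ ^ (n+1) * ‖v‖ ^ s) := by
    have hFsub : F (n+1) ξ - F (n+1) 0
        = (iteratedFDerivWithin ℝ (n+1) f K (γ ξ)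
            - iteratedFDerivWithin ℝ (n+1) f K y) (fun _ => v) := by
      simp [hF, hγ, ContinuousMultilinearMap.sub_apply]
    rw [hFsub]
    have h1 := (iteratedFDerivWithin ℝ (n+1) f K (γ ξ)
        - iteratedFDerivWithin ℝ (n+1) f K y).le_opNorm (fun _ => v)
    have hprod : (∏ _i : Fin (n+1), ‖v‖) = ‖v‖ ^ (n+1) := by
      rw [Finset.prod_const, Finset.card_univ, Fintype.card_fin]
    rw [hprod] at h1
    have h2 : ‖iteratedFDerivWithin ℝ (n+1) f K (γ ξ)
        - iteratedFDerivWithin ℝ (n+1) f K y‖ ≤ R * ‖v‖ ^ s := by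
      have h3 := hH (γ ξ) hz y hy
      refine h3.trans ?_
      have h4 : ‖γ ξ - y‖ = ξ * ‖v‖ := by
        rw [hγ0, norm_smul, Real.norm_eq_abs, abs_of_pos hξ.1]
      rw [h4, Real.mul_rpow hξ.1.le (norm_nonneg v)]
      have h5 : ξ ^ s ≤ 1 := Real.rpow_le_one hξ.1.le hξ.2.le hs0.le
      have h6 : (0:ℝ) ≤ ‖v‖ ^ s := Real.rpow_nonneg (norm_nonneg v) s
      exact mul_le_mul_of_nonneg_left (mul_le_of_le_one_left h6 h5) hR.le
    calc |(iteratedFDerivWithin ℝ (n+1) f K (γ ξ)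
            - iteratedFDerivWithin ℝ (n+1) f K y) (fun _ => v)|
        ≤ ‖iteratedFDerivWithin ℝ (n+1) f K (γ ξ)
            - iteratedFDerivWithin ℝ (n+1) f K y‖ * ‖v‖ ^ (n+1) := h1
      _ ≤ (R * ‖v‖ ^ s) * ‖v‖ ^ (n+1) := by
          have : (0:ℝ) ≤ ‖v‖ ^ (n+1) := pow_nonneg (norm_nonneg v) _
          nlinarith [norm_nonneg (iteratedFDerivWithin ℝ (n+1) f K (γ ξ)
            - iteratedFDerivWithin ℝ (n+1) f K y)]
      _ = R * (‖v‖ ^ (n+1) * ‖v‖ ^ s) := by ring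
  rw [hmain, abs_div, abs_of_pos (by positivity : (0:ℝ) < ((n+1).factorial : ℝ))]
  rw [div_le_iff₀ (by positivity : (0:ℝ) < ((n+1).factorial : ℝ))]
  have hfin := hkey
  have : R / ((n+1).factorial : ℝ) * (‖v‖ ^ (n+1) * ‖v‖ ^ s) * ((n+1).factorial : ℝ)
      = R * (‖v‖ ^ (n+1) * ‖v‖ ^ s) := by
    field_simp
  rw [this]
  exact hfin

lemma poly_eq_taylor {D r : ℕ}
    (G : ∀ m : ℕ, ContinuousMultilinearMap ℝ (fun _ : Fin m => EuclideanSpace ℝ (Fin D)) ℝ)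
    (v : EuclideanSpace ℝ (Fin D)) :
    ∑ α ∈ Finset.univ.filter
        (fun α : Fin D → Fin (r + 1) => (∑ i, (α i : ℕ)) ≤ r),
      ((((∑ i, (α i : ℕ)).factorial : ℝ))⁻¹ *
        ∑ j ∈ (Finset.univ : Finset (Fin (∑ i, (α i : ℕ)) → Fin D)).filter
            (fun j => ∀ d, (Finset.univ.filter (fun i => j i = d)).card = (α d : ℕ)),
          G _ (fun i => EuclideanSpace.single (j i) 1))
        * ∏ i, (v i) ^ (α i : ℕ)
    = ∑ k ∈ Finset.range (r + 1), ((k.factorial : ℝ))⁻¹ * G k (fun _ => v) := by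
  classical
  have hmaps : ∀ α ∈ Finset.univ.filter
      (fun α : Fin D → Fin (r + 1) => (∑ i, (α i : ℕ)) ≤ r),
      (∑ i, (α i : ℕ)) ∈ Finset.range (r + 1) := by
    intro α hα
    rw [Finset.mem_range]
    exact Nat.lt_succ_of_le (Finset.mem_filter.mp hα).2
  rw [← Finset.sum_fiberwise_of_maps_to hmaps]
  refine Finset.sum_congr rfl fun k hk => ?_
  exact (level_sum (Nat.lt_succ_iff.mp (Finset.mem_range.mp hk)) G v).symm

/-- **Piecewise polynomial (local Taylor) approximation of a Hölder function:**
for `f` in the Hölder ball `H^β([0,1]^D, R)` with `β = r + s`, there are coefficients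
`c_{m,α}` with `|c_{m,α}| ≤ R/α!` such that the piecewise Taylor polynomial on the grid
of mesh `1/M` approximates `f` uniformly within `C M^{-β}`, with `C` depending only
on `D, β, R`. -/
theorem stmt_12 (D r : ℕ) (hD : 1 ≤ D) (s R : ℝ)
    (hs : s ∈ Set.Ioc (0 : ℝ) 1) (hR : 0 < R) :
    ∃ C > (0 : ℝ), ∀ f : EuclideanSpace ℝ (Fin D) → ℝ,
      ContDiffOn ℝ (r : ℕ∞) f (unitCube D) →
      (∀ k : ℕ, k ≤ r → ∀ x ∈ unitCube D,
        ‖iteratedFDerivWithin ℝ k f (unitCube D) x‖ ≤ R) →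
      (∀ x ∈ unitCube D, ∀ x' ∈ unitCube D,
        ‖iteratedFDerivWithin ℝ r f (unitCube D) x -
            iteratedFDerivWithin ℝ r f (unitCube D) x'‖ ≤ R * ‖x - x'‖ ^ s) →
      ∀ M : ℕ, 0 < M →
        ∃ c : (Fin D → Fin (M + 1)) → (Fin D → Fin (r + 1)) → ℝ,
          (∀ m α, (∑ i, (α i : ℕ)) ≤ r →
            |c m α| ≤ R / ∏ i, ((α i : ℕ).factorial : ℝ)) ∧
          ∀ x ∈ unitCube D,
            |f x - ∑ m : Fin D → Fin (M + 1),
                Set.indicator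
                  {x' : EuclideanSpace ℝ (Fin D) | ∀ i,
                    x' i ∈ Set.Ioc ((((m i : ℕ) : ℝ) - 1) / M) (((m i : ℕ) : ℝ) / M)}
                  (fun x' =>
                    ∑ α ∈ Finset.univ.filter
                        (fun α : Fin D → Fin (r + 1) => (∑ i, (α i : ℕ)) ≤ r),
                      c m α * ∏ i, (x' i - ((m i : ℕ) : ℝ) / M) ^ (α i : ℕ)) x|
              ≤ C * (M : ℝ) ^ (-((r : ℝ) + s)) := by
  classical
  obtain ⟨hs0, hs1⟩ := hs
  have hD0 : (0:ℝ) < Real.sqrt D := Real.sqrt_pos.mpr (by exact_mod_cast hD)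
  refine ⟨R / r.factorial * Real.sqrt D ^ ((r:ℝ) + s), by positivity, ?_⟩
  intro f hf hbound hH M hM
  have hM' : (0:ℝ) < (M:ℝ) := by exact_mod_cast hM
  set K := unitCube D with hKdef
  -- grid points
  set ym : (Fin D → Fin (M + 1)) → EuclideanSpace ℝ (Fin D) :=
    fun m => WithLp.toLp 2 (fun i => ((m i : ℕ) : ℝ) / M) with hym
  have hymK : ∀ m, ym m ∈ K := by
    intro m i
    constructor
    · positivity
    · rw [div_le_one hM']
      exact_mod_cast Nat.lt_succ_iff.mp (m i).isLt
  -- the coefficients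
  set c : (Fin D → Fin (M + 1)) → (Fin D → Fin (r + 1)) → ℝ := fun m α =>
    (((∑ i, (α i : ℕ)).factorial : ℝ))⁻¹ *
      ∑ j ∈ (Finset.univ : Finset (Fin (∑ i, (α i : ℕ)) → Fin D)).filter
          (fun j => ∀ d, (Finset.univ.filter (fun i => j i = d)).card = (α d : ℕ)),
        iteratedFDerivWithin ℝ (∑ i, (α i : ℕ)) f K (ym m)
          (fun i => EuclideanSpace.single (j i) 1) with hc
  refine ⟨c, ?_, ?_⟩
  · -- coefficient bound
    intro m α hα
    set k := ∑ i, (α i : ℕ) with hk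
    set J := (Finset.univ : Finset (Fin k → Fin D)).filter
        (fun j => ∀ d, (Finset.univ.filter (fun i => j i = d)).card = (α d : ℕ)) with hJ
    have hterm : ∀ j ∈ J,
        |iteratedFDerivWithin ℝ k f K (ym m) (fun i => EuclideanSpace.single (j i) 1)| ≤ R := by
      intro j _
      have h1 := (iteratedFDerivWithin ℝ k f K (ym m)).le_opNorm
        (fun i => EuclideanSpace.single (j i) 1)
      have h2 : (∏ i : Fin k, ‖EuclideanSpace.single (j i) (1:ℝ)‖) = 1 := by
        simp [EuclideanSpace.norm_single]
      rw [h2, mul_one] at h1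
      exact (le_trans h1 (hbound k hα (ym m) (hymK m)))
    have hcard : (J.card : ℝ) * ∏ i, ((α i : ℕ).factorial : ℝ) = (k.factorial : ℝ) := by
      have h1 : J.card = Nat.multinomial Finset.univ (fun d => (α d : ℕ)) :=
        card_fiber_eq_multinomial (fun d => (α d : ℕ)) rfl
      have h2 := Nat.multinomial_spec Finset.univ (fun d => (α d : ℕ))
      have h3 : J.card * ∏ i, ((α i : ℕ)).factorial = k.factorial := by
        rw [h1, mul_comm]
        exact h2
      exact_mod_cast congrArg (fun n : ℕ => (n : ℝ)) h3
    have habs : |c m α| ≤ (k.factorial : ℝ)⁻¹ * (J.card * R) := by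
      rw [hc]
      simp only
      rw [abs_mul, abs_inv, abs_of_nonneg (by positivity : (0:ℝ) ≤ (k.factorial : ℝ))]
      refine mul_le_mul_of_nonneg_left ?_ (by positivity)
      refine (Finset.abs_sum_le_sum_abs _ _).trans ?_
      calc ∑ j ∈ J, |iteratedFDerivWithin ℝ k f K (ym m)
              (fun i => EuclideanSpace.single (j i) 1)|
          ≤ ∑ _j ∈ J, R := Finset.sum_le_sum hterm
        _ = J.card * R := by rw [Finset.sum_const, nsmul_eq_mul]
    refine habs.trans (le_of_eq ?_)
    have hprodpos : (0:ℝ) < ∏ i, ((α i : ℕ).factorial : ℝ) := by positivity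
    have hkpos : (0:ℝ) < (k.factorial : ℝ) := by positivity
    rw [eq_div_iff (ne_of_gt hprodpos)]
    calc (k.factorial : ℝ)⁻¹ * ((J.card : ℝ) * R) * ∏ i, ((α i : ℕ).factorial : ℝ)
        = ((J.card : ℝ) * ∏ i, ((α i : ℕ).factorial : ℝ)) * R * (k.factorial : ℝ)⁻¹ := by
          ring
      _ = R := by rw [hcard]; field_simp
  · -- approximation bound
    intro x hx
    -- locate the cell of x
    have hceil : ∀ i : Fin D, ⌈x i * M⌉₊ < M + 1 := by
      intro i
      have h1 : x i * M ≤ M := by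
        have := (hx i).2
        nlinarith
      exact Nat.lt_succ_of_le (Nat.ceil_le.mpr h1)
    set m₀ : Fin D → Fin (M + 1) := fun i => ⟨⌈x i * M⌉₊, hceil i⟩ with hm₀
    have hmem : ∀ i : Fin D,
        x i ∈ Set.Ioc ((((m₀ i : ℕ) : ℝ) - 1) / M) (((m₀ i : ℕ) : ℝ) / M) := by
      intro i
      have h0 : (0:ℝ) ≤ x i * M := mul_nonneg (hx i).1 hM'.le
      constructor
      · rw [div_lt_iff₀ hM']
        have := Nat.ceil_lt_add_one h0
        have hval : ((m₀ i : ℕ) : ℝ) = (⌈x i * M⌉₊ : ℝ) := rfl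
        rw [hval]
        linarith
      · rw [le_div_iff₀ hM']
        exact Nat.le_ceil _
    have hdisj : ∀ a b : ℕ, a < b → ∀ t : ℝ, t ≤ (a:ℝ)/M → ((b:ℝ)-1)/M < t → False := by
      intro a b hab t h1 h2
      have hc1 : (a:ℝ) ≤ (b:ℝ) - 1 := by
        have hc0 : ((a+1 : ℕ) : ℝ) ≤ (b : ℝ) := by exact_mod_cast Nat.cast_le.mpr hab
        push_cast at hc0
        linarith
      have hc2 : (a:ℝ)/M ≤ ((b:ℝ)-1)/M := by gcongr
      linarith
    have huniq : ∀ m : Fin D → Fin (M + 1), m ≠ m₀ →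
        x ∉ {x' : EuclideanSpace ℝ (Fin D) | ∀ i,
          x' i ∈ Set.Ioc ((((m i : ℕ) : ℝ) - 1) / M) (((m i : ℕ) : ℝ) / M)} := by
      intro m hne hmem'
      apply hne
      funext i
      by_contra hne'
      have hvals : (m i : ℕ) ≠ (m₀ i : ℕ) := fun h => hne' (Fin.ext h)
      rcases lt_or_gt_of_ne hvals with h | h
      · exact hdisj _ _ h (x i) (hmem' i).2 (hmem i).1
      · exact hdisj _ _ h (x i) (hmem i).2 (hmem' i).1
    have hxmem : x ∈ {x' : EuclideanSpace ℝ (Fin D) | ∀ i,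
        x' i ∈ Set.Ioc ((((m₀ i : ℕ) : ℝ) - 1) / M) (((m₀ i : ℕ) : ℝ) / M)} := hmem
    have hsum_eq : (∑ m : Fin D → Fin (M + 1),
        Set.indicator
          {x' : EuclideanSpace ℝ (Fin D) | ∀ i,
            x' i ∈ Set.Ioc ((((m i : ℕ) : ℝ) - 1) / M) (((m i : ℕ) : ℝ) / M)}
          (fun x' =>
            ∑ α ∈ Finset.univ.filter
                (fun α : Fin D → Fin (r + 1) => (∑ i, (α i : ℕ)) ≤ r),
              c m α * ∏ i, (x' i - ((m i : ℕ) : ℝ) / M) ^ (α i : ℕ)) x)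
        = ∑ α ∈ Finset.univ.filter
            (fun α : Fin D → Fin (r + 1) => (∑ i, (α i : ℕ)) ≤ r),
          c m₀ α * ∏ i, (x i - ((m₀ i : ℕ) : ℝ) / M) ^ (α i : ℕ) := by
      rw [Finset.sum_eq_single_of_mem m₀ (Finset.mem_univ _)
        (fun m _ hne => Set.indicator_of_notMem (huniq m hne) _)]
      exact Set.indicator_of_mem hxmem _
    set v : EuclideanSpace ℝ (Fin D) := x - ym m₀ with hv
    have hvi : ∀ i, v i = x i - ((m₀ i : ℕ) : ℝ) / M := fun i => rfl
    have hpoly : ∑ α ∈ Finset.univ.filter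
          (fun α : Fin D → Fin (r + 1) => (∑ i, (α i : ℕ)) ≤ r),
        c m₀ α * ∏ i, (x i - ((m₀ i : ℕ) : ℝ) / M) ^ (α i : ℕ)
        = ∑ k ∈ Finset.range (r + 1), ((k.factorial : ℝ))⁻¹ *
            iteratedFDerivWithin ℝ k f K (ym m₀) (fun _ => v) := by
      rw [← poly_eq_taylor (fun k => iteratedFDerivWithin ℝ k f K (ym m₀)) v]
      refine Finset.sum_congr rfl fun α _ => ?_
      congr 1
    -- bound on the mesh
    have hvb : ∀ i, |v i| ≤ 1 / M := by
      intro i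
      have h1 := (hmem i).1
      have h2 := (hmem i).2
      have heq : (((m₀ i : ℕ) : ℝ) - 1)/M = ((m₀ i : ℕ) : ℝ)/M - 1/M := by ring
      have hMpos : (0:ℝ) < 1 / M := by positivity
      rw [hvi, abs_le]
      constructor
      · rw [heq] at h1
        linarith
      · linarith
    have hvle : ‖v‖ ≤ Real.sqrt D / M := by
      rw [EuclideanSpace.norm_eq]
      have hsum : ∑ i, ‖v i‖ ^ 2 ≤ (D : ℝ) * (1/M)^2 := by
        have h1 : ∀ i ∈ Finset.univ, ‖v i‖ ^ 2 ≤ (1/M : ℝ)^2 := by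
          intro i _
          rw [Real.norm_eq_abs]
          exact pow_le_pow_left₀ (abs_nonneg _) (hvb i) 2
        refine (Finset.sum_le_sum h1).trans_eq ?_
        rw [Finset.sum_const, Finset.card_univ, Fintype.card_fin, nsmul_eq_mul]
      refine (Real.sqrt_le_sqrt hsum).trans_eq ?_
      rw [Real.sqrt_mul (Nat.cast_nonneg D), Real.sqrt_sq (by positivity : (0:ℝ) ≤ 1/M)]
      ring
    have hT := taylor_holder hs0 hs1 hR hf hH hx (hymK m₀)
    rw [hsum_eq, hpoly]
    refine le_trans hT ?_
    have hvn : (0:ℝ) ≤ ‖v‖ := norm_nonneg v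
    have h2 : ‖v‖ ^ r ≤ (Real.sqrt D / M) ^ r := pow_le_pow_left₀ hvn hvle r
    have h3 : ‖v‖ ^ s ≤ (Real.sqrt D / M) ^ s := Real.rpow_le_rpow hvn hvle hs0.le
    have h1 : ‖v‖ ^ r * ‖v‖ ^ s ≤ (Real.sqrt D / M) ^ r * (Real.sqrt D / M) ^ s :=
      mul_le_mul h2 h3 (Real.rpow_nonneg hvn s) (by positivity)
    have hδ : (Real.sqrt D / M) ^ r * (Real.sqrt D / M) ^ s
        = Real.sqrt D ^ ((r:ℝ) + s) * (M:ℝ) ^ (-((r:ℝ) + s)) := by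
      have hδ0 : (0:ℝ) < Real.sqrt D / M := by positivity
      rw [← Real.rpow_natCast (Real.sqrt D / M) r, ← Real.rpow_add hδ0,
        Real.div_rpow hD0.le hM'.le, Real.rpow_neg hM'.le, div_eq_mul_inv]
    calc R / r.factorial * (‖v‖ ^ r * ‖v‖ ^ s)
        ≤ R / r.factorial * ((Real.sqrt D / M) ^ r * (Real.sqrt D / M) ^ s) :=
          mul_le_mul_of_nonneg_left h1 (by positivity)
      _ = R / r.factorial * Real.sqrt D ^ ((r:ℝ) + s) * (M:ℝ) ^ (-((r:ℝ) + s)) := by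
          rw [hδ]; ring
end
end
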